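/- arXiv:1711.07074 — 8 statements merged into one kernel-verified Lean document; each statement's English description precedes it below -/
import Mathlib

section
/- The kernel of the incidence matrix C_G of a finite directed graph G contains a strictly positive vector if and only if every connected component of G is strongly connected (i.e. G is weakly reversible). -/
open scoped Classical

/-- for a finite directed graph (nodes `Fin m`, edges `Fin p` given by
source/target maps, no self-loops), the kernel of the incidence matrix contains a strictly
positive vector if and only if every connected component is strongly connected. -/
theorem pos_kernel_incidence_iff_weakly_reversible
    (m p : ℕ) (src tgt : Fin p → Fin m) (hloop : ∀ e, src e ≠ tgt e) :
    (∃ v : Fin p → ℝ, (∀ e, 0 < v e) ∧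
        Matrix.mulVec
          (fun (i : Fin m) (e : Fin p) =>
            (if tgt e = i then (1 : ℝ) else 0) - (if src e = i then (1 : ℝ) else 0))
          v = 0) ↔
      (∀ i k : Fin m,
        Relation.EqvGen
          (fun i k => ∃ e, (src e = i ∧ tgt e = k) ∨ (src e = k ∧ tgt e = i)) i k →
        Relation.ReflTransGen (fun i k => ∃ e, src e = i ∧ tgt e = k) i k) := by
  classical
  set C : Matrix (Fin m) (Fin p) ℝ := fun i e =>
      (if tgt e = i then (1 : ℝ) else 0) - (if src e = i then (1 : ℝ) else 0) with hC
  set step : Fin m → Fin m → Prop := fun a b => ∃ e, src e = a ∧ tgt e = b with hstep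
  constructor
  · rintro ⟨v, hvpos, hker⟩ i k hik
    -- every edge can be traversed backwards via a directed path
    have rev : ∀ e0 : Fin p, Relation.ReflTransGen step (tgt e0) (src e0) := by
      intro e0
      set S : Finset (Fin m) :=
        Finset.univ.filter fun x => Relation.ReflTransGen step (tgt e0) x with hS
      have hmem : ∀ x, x ∈ S ↔ Relation.ReflTransGen step (tgt e0) x := by
        intro x; simp [hS]
      have hclosed : ∀ e : Fin p, src e ∈ S → tgt e ∈ S := fun e hs =>
        (hmem _).2 (((hmem _).1 hs).tail ⟨e, rfl, rfl⟩)
      have hker' : ∀ j, ∑ f, C j f * v f = 0 := by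
        intro j
        have := congrFun hker j
        simpa [Matrix.mulVec, dotProduct] using this
      have hcol : ∀ e : Fin p, ∑ j ∈ S, C j e
          = (if tgt e ∈ S then (1 : ℝ) else 0) - (if src e ∈ S then 1 else 0) := by
        intro e
        rw [hC]
        rw [Finset.sum_sub_distrib, Finset.sum_ite_eq, Finset.sum_ite_eq]
      have h0 : ∑ e : Fin p,
          ((if tgt e ∈ S then (1 : ℝ) else 0) - (if src e ∈ S then 1 else 0)) * v e = 0 := by
        have h1 : ∑ j ∈ S, ∑ f : Fin p, C j f * v f = 0 :=
          Finset.sum_eq_zero fun j _ => hker' j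
        rw [Finset.sum_comm] at h1
        calc ∑ e : Fin p,
              ((if tgt e ∈ S then (1 : ℝ) else 0) - (if src e ∈ S then 1 else 0)) * v e
            = ∑ e : Fin p, (∑ j ∈ S, C j e) * v e := by
              refine Finset.sum_congr rfl fun e _ => ?_
              rw [hcol]
          _ = ∑ e : Fin p, ∑ j ∈ S, C j e * v e := by
              refine Finset.sum_congr rfl fun e _ => ?_
              rw [Finset.sum_mul]
          _ = 0 := h1
      have hnn : ∀ e ∈ Finset.univ (α := Fin p),
          0 ≤ ((if tgt e ∈ S then (1 : ℝ) else 0) - (if src e ∈ S then 1 else 0)) * v e := by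
        intro e _
        by_cases hs : src e ∈ S
        · have ht := hclosed e hs
          simp [hs, ht]
        · by_cases ht : tgt e ∈ S
          · simp only [hs, ht, if_true, if_false, sub_zero, one_mul]
            exact (hvpos e).le
          · simp [hs, ht]
      have hall := (Finset.sum_eq_zero_iff_of_nonneg hnn).1 h0 e0 (Finset.mem_univ _)
      have htS : tgt e0 ∈ S := (hmem _).2 Relation.ReflTransGen.refl
      by_contra hcon
      have hsS : src e0 ∉ S := fun hmem' => hcon ((hmem _).1 hmem')
      rw [if_pos htS, if_neg hsS, sub_zero, one_mul] at hall
      exact (hvpos e0).ne' hall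
    have main : ∀ a b : Fin m,
        Relation.EqvGen
          (fun i k => ∃ e, (src e = i ∧ tgt e = k) ∨ (src e = k ∧ tgt e = i)) a b →
        Relation.ReflTransGen step a b ∧ Relation.ReflTransGen step b a := by
      intro a b hab
      induction hab with
      | rel a b h =>
        obtain ⟨e, ⟨h1, h2⟩ | ⟨h1, h2⟩⟩ := h
        · subst h1; subst h2
          exact ⟨Relation.ReflTransGen.single ⟨e, rfl, rfl⟩, rev e⟩
        · subst h1; subst h2
          exact ⟨rev e, Relation.ReflTransGen.single ⟨e, rfl, rfl⟩⟩
      | refl => exact ⟨Relation.ReflTransGen.refl, Relation.ReflTransGen.refl⟩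
      | symm _ _ _ ih => exact ⟨ih.2, ih.1⟩
      | trans _ _ _ _ _ ih1 ih2 => exact ⟨ih1.1.trans ih2.1, ih2.2.trans ih1.2⟩
    exact (main i k hik).1
  · intro h
    -- a directed path from a to b gives a nonnegative flow with divergence δ_b - δ_a
    have pathflow : ∀ a b : Fin m, Relation.ReflTransGen step a b →
        ∃ w : Fin p → ℝ, (∀ f, 0 ≤ w f) ∧ ∀ j, (∑ f, C j f * w f)
          = (if b = j then (1 : ℝ) else 0) - (if a = j then 1 else 0) := by
      intro a b hab
      induction hab with
      | refl => exact ⟨0, fun f => le_refl 0, fun j => by simp⟩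
      | tail _ hstep ih =>
        obtain ⟨w, hw0, hwsum⟩ := ih
        obtain ⟨e, he1, he2⟩ := hstep
        refine ⟨fun f => w f + (if f = e then 1 else 0), ?_, ?_⟩
        · intro f
          have : (0 : ℝ) ≤ if f = e then 1 else 0 := by positivity
          exact add_nonneg (hw0 f) this
        · intro j
          have hsplit : ∑ f, C j f * (w f + (if f = e then 1 else 0))
              = (∑ f, C j f * w f) + ∑ f, C j f * (if f = e then 1 else 0) := by
            rw [← Finset.sum_add_distrib]
            refine Finset.sum_congr rfl fun f _ => by ring
          rw [hsplit, hwsum]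
          have h2 : ∑ f, C j f * (if f = e then (1 : ℝ) else 0) = C j e := by
            simp [mul_ite, Finset.sum_ite_eq']
          rw [h2, hC]
          simp only [he1, he2]
          ring
    -- for each edge, a nonnegative kernel vector with weight ≥ 1 on that edge
    have key : ∀ e : Fin p, ∃ u : Fin p → ℝ, (∀ f, 0 ≤ u f) ∧ 1 ≤ u e ∧
        ∀ j, ∑ f, C j f * u f = 0 := by
      intro e
      have hrev : Relation.ReflTransGen step (tgt e) (src e) :=
        h _ _ (Relation.EqvGen.symm _ _ (Relation.EqvGen.rel _ _ ⟨e, Or.inl ⟨rfl, rfl⟩⟩))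
      obtain ⟨w, hw0, hwsum⟩ := pathflow _ _ hrev
      refine ⟨fun f => w f + (if f = e then 1 else 0), ?_, ?_, ?_⟩
      · intro f
        have : (0 : ℝ) ≤ if f = e then 1 else 0 := by positivity
        exact add_nonneg (hw0 f) this
      · have := hw0 e
        show (1:ℝ) ≤ w e + if e = e then 1 else 0
        rw [if_pos rfl]
        linarith
      · intro j
        have hsplit : ∑ f, C j f * (w f + (if f = e then 1 else 0))
            = (∑ f, C j f * w f) + ∑ f, C j f * (if f = e then 1 else 0) := by
          rw [← Finset.sum_add_distrib]
          refine Finset.sum_congr rfl fun f _ => by ring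
        have h2 : ∑ f, C j f * (if f = e then (1 : ℝ) else 0) = C j e := by
          simp [mul_ite, Finset.sum_ite_eq']
        rw [hsplit, hwsum, h2, hC]
        ring
    choose u hu0 hu1 huk using key
    refine ⟨fun f => ∑ e, u e f, ?_, ?_⟩
    · intro f
      have h1 : (1 : ℝ) ≤ ∑ e, u e f := by
        calc (1 : ℝ) ≤ u f f := hu1 f
          _ ≤ ∑ e, u e f :=
            Finset.single_le_sum (fun e _ => hu0 e f) (Finset.mem_univ f)
      linarith
    · funext j
      show ∑ f, C j f * (∑ e, u e f) = 0
      calc ∑ f, C j f * ∑ e, u e f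
          = ∑ f, ∑ e, C j f * u e f := by
            refine Finset.sum_congr rfl fun f _ => Finset.mul_sum _ _ _
        _ = ∑ e, ∑ f, C j f * u e f := Finset.sum_comm
        _ = 0 := Finset.sum_eq_zero fun e _ => huk e j
end

section
/- If G' ⪯ G are two reaction graphs associated with the same reaction network, then δ_{G'} ≤ δ_G. -/
open scoped Classical

/-- A reaction graph associated with a reaction network with `n` species and `p` reactions:
nodes labeled by complexes, edges in bijection with reactions (edges are indexed by `Fin p`). -/
structure ReactionGraph (n p : ℕ) where
  m : ℕ
  src : Fin p → Fin m
  tgt : Fin p → Fin m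
  Y : Fin m → Fin n → ℕ
  noIsolated : ∀ i : Fin m, ∃ e : Fin p, src e = i ∨ tgt e = i
  noSelf : ∀ e : Fin p, Y (src e) ≠ Y (tgt e)
  edgeLabelInj : ∀ e e' : Fin p, Y (src e) = Y (src e') → Y (tgt e) = Y (tgt e') → e = e'

namespace ReactionGraph

variable {n p : ℕ}

/-- Incidence matrix. -/
noncomputable def inc (G : ReactionGraph n p) : Matrix (Fin G.m) (Fin p) ℝ :=
  fun i e => (if G.tgt e = i then (1 : ℝ) else 0) - (if G.src e = i then (1 : ℝ) else 0)

/-- Labeling matrix. -/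
noncomputable def lab (G : ReactionGraph n p) : Matrix (Fin n) (Fin G.m) ℝ :=
  fun i k => (G.Y k i : ℝ)

/-- Stoichiometric matrix of the underlying network. -/
noncomputable def stoich (G : ReactionGraph n p) : Matrix (Fin n) (Fin p) ℝ :=
  fun i e => (G.Y (G.tgt e) i : ℝ) - (G.Y (G.src e) i : ℝ)

/-- Undirected adjacency. -/
def Adj (G : ReactionGraph n p) (i k : Fin G.m) : Prop :=
  ∃ e : Fin p, (G.src e = i ∧ G.tgt e = k) ∨ (G.src e = k ∧ G.tgt e = i)

/-- Connectivity: same connected component. -/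
def Conn (G : ReactionGraph n p) : Fin G.m → Fin G.m → Prop :=
  Relation.EqvGen G.Adj

/-- Directed reachability. -/
def Reach (G : ReactionGraph n p) : Fin G.m → Fin G.m → Prop :=
  Relation.ReflTransGen (fun i k => ∃ e : Fin p, G.src e = i ∧ G.tgt e = k)

/-- Every connected component is strongly connected. -/
def WeaklyReversible (G : ReactionGraph n p) : Prop :=
  ∀ i k, G.Conn i k → G.Reach i k

noncomputable def connSetoid (G : ReactionGraph n p) : Setoid (Fin G.m) :=
  ⟨G.Conn, Relation.EqvGen.is_equivalence _⟩

/-- Number of connected components. -/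
noncomputable def numComponents (G : ReactionGraph n p) : ℕ :=
  Nat.card (Quotient G.connSetoid)

/-- Deficiency `m_G - ℓ_G - s`. -/
noncomputable def deficiency (G : ReactionGraph n p) : ℤ :=
  (G.m : ℤ) - G.numComponents - G.stoich.rank

/-- Morphism of reaction graphs: maps edges to edges and preserves labels. -/
structure Morphism (G G' : ReactionGraph n p) where
  toFun : Fin G.m → Fin G'.m
  map_edge : ∀ e : Fin p, ∃ e' : Fin p,
    G'.src e' = toFun (G.src e) ∧ G'.tgt e' = toFun (G.tgt e)
  map_label : ∀ i, G'.Y (toFun i) = G.Y i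

/-- Mass-action monomial `x^y`. -/
noncomputable def monomial (x : Fin n → ℝ) (y : Fin n → ℕ) : ℝ := ∏ i, x i ^ y i

/-- Mass-action kinetics rate vector determined by rate constants `κ`. -/
noncomputable def massAction (G : ReactionGraph n p) (κ : Fin p → ℝ) (x : Fin n → ℝ) :
    Fin p → ℝ :=
  fun e => κ e * monomial x (G.Y (G.src e))

/-- Positive vector. -/
def Pos {n : ℕ} (x : Fin n → ℝ) : Prop := ∀ i, 0 < x i

/-- `t` is a spanning tree of the connected component of `i`, rooted at `i`:
every other node of the component has exactly one outgoing edge, and iterating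
edges strictly decreases a depth function (no cycles). -/
def IsSpanningTree (G : ReactionGraph n p) (i : Fin G.m) (t : Fin G.m → Option (Fin p)) :
    Prop :=
  t i = none ∧
  (∀ k, k ≠ i → G.Conn i k → ∃ e, t k = some e) ∧
  (∀ k e, t k = some e → G.src e = k ∧ G.Conn i k ∧ k ≠ i) ∧
  ∃ d : Fin G.m → ℕ, ∀ k e, t k = some e → d (G.tgt e) < d k

/-- Tree constant `K_{G,i}`: sum over spanning trees rooted at `i` of the products of rate
constants of the tree's edges. -/
noncomputable def K (G : ReactionGraph n p) (κ : Fin p → ℝ) (i : Fin G.m) : ℝ :=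
  ∑ t : {t : Fin G.m → Option (Fin p) // G.IsSpanningTree i t},
    ∏ k : Fin G.m, (t.val k).elim 1 κ

/-- The matrix of the linear map `Ψ_G` (labeling map together with componentwise sums). -/
noncomputable def psiMat (G : ReactionGraph n p) : Matrix (Fin n ⊕ Fin G.m) (Fin G.m) ℝ :=
  fun r k => match r with
    | Sum.inl i => (G.Y k i : ℝ)
    | Sum.inr i₀ => if G.Conn i₀ k then 1 else 0

noncomputable def kerPsi (G : ReactionGraph n p) : Submodule ℝ (Fin G.m → ℝ) :=
  LinearMap.ker G.psiMat.mulVecLin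

/-! ### Auxiliary material for the proof of `deficiency_mono` -/

/-- The submodule of functions constant on connected components. -/
noncomputable def locConst (G : ReactionGraph n p) : Submodule ℝ (Fin G.m → ℝ) where
  carrier := {x | ∀ i k, G.Conn i k → x i = x k}
  add_mem' := fun hx hy i k h => by simp only [Pi.add_apply, hx i k h, hy i k h]
  zero_mem' := fun i k _ => rfl
  smul_mem' := fun c x hx i k h => by simp only [Pi.smul_apply, hx i k h]

lemma finrank_locConst (G : ReactionGraph n p) :
    Module.finrank ℝ G.locConst = Nat.card (Quotient G.connSetoid) := by
  classical
  have e : G.locConst ≃ₗ[ℝ] (Quotient G.connSetoid → ℝ) :=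
    { toFun := fun x q => Quotient.liftOn q (x : Fin G.m → ℝ) (fun a b h => x.2 a b h)
      map_add' := by
        intro x y
        funext q
        induction q using Quotient.ind
        rfl
      map_smul' := by
        intro c x
        funext q
        induction q using Quotient.ind
        rfl
      invFun := fun y => ⟨fun i => y (Quotient.mk G.connSetoid i),
        fun i k h => by simp only [Quotient.sound (s := G.connSetoid) h]⟩
      left_inv := by
        intro x
        ext i
        rfl
      right_inv := by
        intro y
        funext q
        induction q using Quotient.ind
        rfl }
  rw [e.finrank_eq, Module.finrank_pi, Nat.card_eq_fintype_card]

/-- The chosen image edge of an edge under a morphism. -/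
noncomputable def Morphism.emap {G G' : ReactionGraph n p} (f : Morphism G G') (e : Fin p) :
    Fin p := (f.map_edge e).choose

lemma Morphism.emap_src {G G' : ReactionGraph n p} (f : Morphism G G') (e : Fin p) :
    G'.src (f.emap e) = f.toFun (G.src e) := (f.map_edge e).choose_spec.1

lemma Morphism.emap_tgt {G G' : ReactionGraph n p} (f : Morphism G G') (e : Fin p) :
    G'.tgt (f.emap e) = f.toFun (G.tgt e) := (f.map_edge e).choose_spec.2

lemma Morphism.emap_bij {G G' : ReactionGraph n p} (f : Morphism G G') :
    Function.Bijective f.emap := by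
  rw [← Finite.injective_iff_bijective]
  intro e1 e2 h
  apply G.edgeLabelInj e1 e2
  · have h1 : G'.Y (G'.src (f.emap e1)) = G'.Y (G'.src (f.emap e2)) := by rw [h]
    rwa [f.emap_src, f.emap_src, f.map_label, f.map_label] at h1
  · have h1 : G'.Y (G'.tgt (f.emap e1)) = G'.Y (G'.tgt (f.emap e2)) := by rw [h]
    rwa [f.emap_tgt, f.emap_tgt, f.map_label, f.map_label] at h1

lemma Morphism.conn_map {G G' : ReactionGraph n p} (f : Morphism G G') {i k : Fin G.m}
    (h : G.Conn i k) : G'.Conn (f.toFun i) (f.toFun k) := by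
  induction h with
  | rel a b hab =>
    obtain ⟨e, he⟩ := hab
    apply Relation.EqvGen.rel
    rcases he with ⟨hs, ht⟩ | ⟨hs, ht⟩
    · exact ⟨f.emap e, Or.inl ⟨by rw [f.emap_src, hs], by rw [f.emap_tgt, ht]⟩⟩
    · exact ⟨f.emap e, Or.inr ⟨by rw [f.emap_src, hs], by rw [f.emap_tgt, ht]⟩⟩
  | refl a => exact Relation.EqvGen.refl _
  | symm a b _ ih => exact Relation.EqvGen.symm _ _ ih
  | trans a b c _ _ ih1 ih2 => exact Relation.EqvGen.trans _ _ _ ih1 ih2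

lemma Morphism.ker_eq {G G' : ReactionGraph n p} (f : Morphism G G') :
    LinearMap.ker ((G.locConst.mkQ).comp (LinearMap.funLeft ℝ ℝ f.toFun)) = G'.locConst := by
  ext x'
  simp only [LinearMap.mem_ker, LinearMap.comp_apply, Submodule.mkQ_apply,
    Submodule.Quotient.mk_eq_zero]
  constructor
  · intro h i' k' hconn
    show x' i' = x' k'
    induction hconn with
    | rel a b hab =>
      obtain ⟨e', he'⟩ := hab
      obtain ⟨e, rfl⟩ := f.emap_bij.2 e'
      have hadj : G.Conn (G.src e) (G.tgt e) :=
        Relation.EqvGen.rel _ _ ⟨e, Or.inl ⟨rfl, rfl⟩⟩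
      have key : x' (f.toFun (G.src e)) = x' (f.toFun (G.tgt e)) := h _ _ hadj
      rcases he' with ⟨hs, ht⟩ | ⟨hs, ht⟩
      · rw [← hs, ← ht, f.emap_src, f.emap_tgt]; exact key
      · rw [← hs, ← ht, f.emap_src, f.emap_tgt]; exact key.symm
    | refl a => rfl
    | symm a b _ ih => exact ih.symm
    | trans a b c _ _ ih1 ih2 => exact ih1.trans ih2
  · intro h i k hconn
    exact h _ _ (f.conn_map hconn)

lemma rank_submatrix_id_equiv {a b : ℕ} (A : Matrix (Fin a) (Fin b) ℝ) (σ : Fin b ≃ Fin b) :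
    (A.submatrix id ⇑σ).rank = A.rank := by
  rw [Matrix.rank, Matrix.rank, Matrix.mulVecLin_submatrix,
    show LinearMap.funLeft ℝ ℝ (id : Fin a → Fin a) = LinearMap.id from rfl,
    show LinearMap.funLeft ℝ ℝ ⇑σ.symm = (LinearEquiv.funCongrLeft ℝ ℝ σ.symm : _) from rfl,
    LinearMap.id_comp, LinearMap.range_comp, LinearEquiv.range, Submodule.map_top]

lemma Morphism.rank_stoich_eq {G G' : ReactionGraph n p} (f : Morphism G G') :
    G'.stoich.rank = G.stoich.rank := by
  let σ : Fin p ≃ Fin p := Equiv.ofBijective f.emap f.emap_bij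
  have hst : G.stoich = G'.stoich.submatrix id ⇑σ := by
    ext i e
    show (G.Y (G.tgt e) i : ℝ) - (G.Y (G.src e) i : ℝ) =
      (G'.Y (G'.tgt (f.emap e)) i : ℝ) - (G'.Y (G'.src (f.emap e)) i : ℝ)
    rw [f.emap_src, f.emap_tgt, f.map_label, f.map_label]
  rw [hst, rank_submatrix_id_equiv]

end ReactionGraph

/-- if `G' ⪯ G` then `δ_{G'} ≤ δ_G`. -/
theorem deficiency_mono {n p : ℕ} (G G' : ReactionGraph n p)
    (f : ReactionGraph.Morphism G G') : G'.deficiency ≤ G.deficiency := by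
  classical
  have hrank : G'.stoich.rank = G.stoich.rank := f.rank_stoich_eq
  have h1 : Module.finrank ℝ ((Fin G.m → ℝ) ⧸ G.locConst)
      + Module.finrank ℝ G.locConst = G.m := by
    rw [Submodule.finrank_quotient_add_finrank, Module.finrank_pi, Fintype.card_fin]
  have h2 : Module.finrank ℝ ((Fin G'.m → ℝ) ⧸ G'.locConst)
      + Module.finrank ℝ G'.locConst = G'.m := by
    rw [Submodule.finrank_quotient_add_finrank, Module.finrank_pi, Fintype.card_fin]
  have h3 : Module.finrank ℝ ((Fin G'.m → ℝ) ⧸ G'.locConst)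
      ≤ Module.finrank ℝ ((Fin G.m → ℝ) ⧸ G.locConst) := by
    set L := (G.locConst.mkQ).comp (LinearMap.funLeft ℝ ℝ f.toFun) with hL
    calc Module.finrank ℝ ((Fin G'.m → ℝ) ⧸ G'.locConst)
        = Module.finrank ℝ ((Fin G'.m → ℝ) ⧸ LinearMap.ker L) := by rw [f.ker_eq]
      _ = Module.finrank ℝ (LinearMap.range L) := (LinearMap.quotKerEquivRange L).finrank_eq
      _ ≤ Module.finrank ℝ ((Fin G.m → ℝ) ⧸ G.locConst) := Submodule.finrank_le _
  have hc : G.numComponents = Module.finrank ℝ G.locConst := (G.finrank_locConst).symm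
  have hc' : G'.numComponents = Module.finrank ℝ G'.locConst := (G'.finrank_locConst).symm
  unfold ReactionGraph.deficiency
  rw [hrank, hc, hc']
  omega
end

section
/- Both the union and the intersection of two admissible partitions of the node set of the canonical split reaction graph are admissible. Consequently, the set of equivalence classes of reaction graphs of a reaction network, ordered by reverse refinement of the corresponding admissible partitions, is a finite lattice with the split class as maximal element and the complex class as minimal element. -/
open scoped Classical

/-- An equivalence relation (partition) on the node set `Fin (2*p)` of the canonical split
reaction graph is admissible if related nodes carry equal labels. -/
def AdmissibleSetoid {q n : ℕ} (L : Fin q → Fin n → ℕ) (s : Setoid (Fin q)) : Prop :=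
  ∀ a b, s.r a b → L a = L b

/-- The labeling of the canonical split reaction graph: node `2j` gets the source complex
and node `2j+1` the target complex of the `j`-th reaction. -/
def splitLabel {n p : ℕ} (rsrc rtgt : Fin p → Fin n → ℕ) : Fin (2 * p) → Fin n → ℕ :=
  fun k => if k.val % 2 = 0 then rsrc ⟨k.val / 2, by omega⟩ else rtgt ⟨k.val / 2, by omega⟩

/-- unions and intersections of admissible partitions are admissible;
consequently the admissible partitions (equivalently, equivalence classes of reaction
graphs, ordered by reverse refinement) form a finite lattice whose minimal admissible
partition is the discrete one (the split class, maximal as a reaction graph) and whose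
maximal admissible partition is `Setoid.ker L` (the complex class, minimal as a reaction
graph). -/
theorem admissible_lattice {n p : ℕ} (rsrc rtgt : Fin p → Fin n → ℕ) :
    (∀ s s' : Setoid (Fin (2 * p)),
        AdmissibleSetoid (splitLabel rsrc rtgt) s →
        AdmissibleSetoid (splitLabel rsrc rtgt) s' →
        AdmissibleSetoid (splitLabel rsrc rtgt) (s ⊔ s') ∧
          AdmissibleSetoid (splitLabel rsrc rtgt) (s ⊓ s')) ∧
      AdmissibleSetoid (splitLabel rsrc rtgt) ⊥ ∧
      AdmissibleSetoid (splitLabel rsrc rtgt) (Setoid.ker (splitLabel rsrc rtgt)) ∧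
      (∀ s : Setoid (Fin (2 * p)), AdmissibleSetoid (splitLabel rsrc rtgt) s →
        ⊥ ≤ s ∧ s ≤ Setoid.ker (splitLabel rsrc rtgt)) ∧
      Finite {s : Setoid (Fin (2 * p)) // AdmissibleSetoid (splitLabel rsrc rtgt) s} := by
  set L := splitLabel rsrc rtgt with hL
  have key : ∀ s : Setoid (Fin (2 * p)), AdmissibleSetoid L s ↔ s ≤ Setoid.ker L := by
    intro s
    constructor
    · intro h a b hab; exact h a b hab
    · intro h a b hab; exact h hab
  refine ⟨?_, ?_, ?_, ?_, ?_⟩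
  · intro s s' hs hs'
    constructor
    · rw [key] at *
      exact sup_le hs hs'
    · rw [key] at *
      exact le_trans inf_le_left hs
  · intro a b hab
    cases hab; rfl
  · intro a b hab; exact hab
  · intro s hs
    exact ⟨bot_le, (key s).1 hs⟩
  · have : Function.Injective
        (fun s : {s : Setoid (Fin (2 * p)) // AdmissibleSetoid L s} =>
          (s.1.r : Fin (2 * p) → Fin (2 * p) → Prop)) := by
      intro s t h
      ext1
      exact Setoid.ext fun a b => by rw [show s.1.r = t.1.r from h]
    exact Finite.of_injective _ this
end

section
/- If there exists a positive node balanced steady state with respect to a reaction graph G (i.e. some x ∈ ℝ^n_{>0} with C_G v(x) = 0, where v is a kinetics taking positive values on positive states), then G is weakly reversible. -/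
open scoped Classical

lemma reach_back_aux {n p : ℕ} (G : ReactionGraph n p) (w : Fin p → ℝ)
    (hw : ∀ e, 0 < w e) (hC : G.inc.mulVec w = 0) (e : Fin p) :
    G.Reach (G.tgt e) (G.src e) := by
  classical
  set S : Finset (Fin G.m) := Finset.univ.filter (fun k => G.Reach (G.tgt e) k) with hS
  have hclosed : ∀ f : Fin p, G.src f ∈ S → G.tgt f ∈ S := by
    intro f hf
    simp only [hS, Finset.mem_filter, Finset.mem_univ, true_and] at hf ⊢
    exact hf.tail ⟨f, rfl, rfl⟩
  have hsum : ∑ f : Fin p,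
      ((if G.tgt f ∈ S then (1:ℝ) else 0) - (if G.src f ∈ S then 1 else 0)) * w f = 0 := by
    have h0 : ∑ i ∈ S, (G.inc.mulVec w) i = 0 := by simp [hC]
    have heq : ∑ f : Fin p,
        ((if G.tgt f ∈ S then (1:ℝ) else 0) - (if G.src f ∈ S then 1 else 0)) * w f
        = ∑ i ∈ S, (G.inc.mulVec w) i := by
      simp only [Matrix.mulVec, dotProduct, ReactionGraph.inc]
      rw [Finset.sum_comm]
      refine Finset.sum_congr rfl fun f _ => ?_
      simp [sub_mul, ite_mul, Finset.sum_sub_distrib, Finset.sum_ite_eq]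
    rw [heq, h0]
  have hnonneg : ∀ f ∈ Finset.univ,
      0 ≤ ((if G.tgt f ∈ S then (1:ℝ) else 0) - (if G.src f ∈ S then 1 else 0)) * w f := by
    intro f _
    apply mul_nonneg _ (hw f).le
    by_cases hs : G.src f ∈ S
    · simp [hs, hclosed f hs]
    · simp only [hs, if_false, sub_zero]
      split <;> norm_num
  have hzero := (Finset.sum_eq_zero_iff_of_nonneg hnonneg).mp hsum e (Finset.mem_univ e)
  have htgt : G.tgt e ∈ S := by
    simp only [hS, Finset.mem_filter, Finset.mem_univ, true_and]
    exact Relation.ReflTransGen.refl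
  have hsrc : G.src e ∈ S := by
    by_contra hs
    simp only [htgt, if_true, hs, if_false, sub_zero, one_mul] at hzero
    exact (hw e).ne' hzero
  simpa [hS] using hsrc

lemma adj_reach_aux {n p : ℕ} (G : ReactionGraph n p) (w : Fin p → ℝ)
    (hw : ∀ e, 0 < w e) (hC : G.inc.mulVec w = 0) {i k : Fin G.m} (h : G.Adj i k) :
    G.Reach i k ∧ G.Reach k i := by
  obtain ⟨e, he | he⟩ := h
  · refine ⟨Relation.ReflTransGen.single ⟨e, he.1, he.2⟩, ?_⟩
    rw [← he.1, ← he.2]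
    exact reach_back_aux G w hw hC e
  · refine ⟨?_, Relation.ReflTransGen.single ⟨e, he.1, he.2⟩⟩
    rw [← he.1, ← he.2]
    exact reach_back_aux G w hw hC e

/-- if a kinetics (positive on positive states) admits a positive node
balanced steady state w.r.t. `G`, then `G` is weakly reversible. -/
theorem weaklyReversible_of_pos_node_balanced {n p : ℕ} (G : ReactionGraph n p)
    (v : (Fin n → ℝ) → Fin p → ℝ)
    (hv : ∀ x, ReactionGraph.Pos x → ∀ e, 0 < v x e)
    (x : Fin n → ℝ) (hx : ReactionGraph.Pos x)
    (hnb : G.inc.mulVec (v x) = 0) :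
    G.WeaklyReversible := by
  have hw : ∀ e, 0 < v x e := hv x hx
  intro i k h
  suffices h' : G.Reach i k ∧ G.Reach k i from h'.1
  induction h with
  | rel a b hab => exact adj_reach_aux G (v x) hw hnb hab
  | refl => exact ⟨Relation.ReflTransGen.refl, Relation.ReflTransGen.refl⟩
  | symm a b _ ih => exact ⟨ih.2, ih.1⟩
  | trans a b c _ _ ih1 ih2 => exact ⟨ih1.1.trans ih2.1, ih2.2.trans ih1.2⟩
end

section
/- Existence criterion for node balanced steady states: Let G be a weakly reversible reaction graph for a mass-action network with rate constants κ, and let u_1,…,u_{δ_G} be a basis of ker Ψ_G. Then there exists a positive node balanced steady state with respect to G if and only if (K_G)^{u_i} := ∏_j K_{G,j}^{u_{ij}} = 1 for all i = 1,…,δ_G. -/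
open scoped Classical

namespace ReactionGraph

variable {n p : ℕ} (G : ReactionGraph n p)

lemma conn_refl (i : Fin G.m) : G.Conn i i := Relation.EqvGen.refl i
lemma conn_symm {i k : Fin G.m} (h : G.Conn i k) : G.Conn k i := Relation.EqvGen.symm _ _ h
lemma conn_trans {i j k : Fin G.m} (h : G.Conn i j) (h' : G.Conn j k) : G.Conn i k :=
  Relation.EqvGen.trans _ _ _ h h'
lemma conn_of_edge (e : Fin p) : G.Conn (G.src e) (G.tgt e) :=
  Relation.EqvGen.rel _ _ ⟨e, Or.inl ⟨rfl, rfl⟩⟩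
lemma src_ne_tgt (e : Fin p) : G.src e ≠ G.tgt e := fun h => G.noSelf e (by rw [h])

lemma exists_out (hwr : G.WeaklyReversible) (i : Fin G.m) : ∃ e, G.src e = i := by
  obtain ⟨e, he⟩ := G.noIsolated i
  rcases he with h | h
  · exact ⟨e, h⟩
  · have hc : G.Conn i (G.src e) := G.conn_symm (h ▸ G.conn_of_edge e)
    have hr := hwr i _ hc
    rcases Relation.ReflTransGen.cases_head hr with h' | ⟨c, ⟨e', he1, _⟩, _⟩
    · exact absurd (h' ▸ h) (Ne.symm (G.src_ne_tgt e))
    · exact ⟨e', he1⟩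

/-! ### Walks along a partial edge-assignment -/

/-- successor along `f` (identity if no outgoing edge assigned) -/
def nextN (f : Fin G.m → Option (Fin p)) (a : Fin G.m) : Fin G.m := (f a).elim a G.tgt

def FStep (f : Fin G.m → Option (Fin p)) (a b : Fin G.m) : Prop :=
  ∃ e, f a = some e ∧ G.tgt e = b

def FReach (f : Fin G.m → Option (Fin p)) : Fin G.m → Fin G.m → Prop :=
  Relation.ReflTransGen (G.FStep f)

def walk (f : Fin G.m → Option (Fin p)) (a : Fin G.m) : ℕ → Fin G.m
  | 0 => a
  | (s+1) => G.nextN f (walk f a s)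

variable {G}

lemma nextN_eq {f : Fin G.m → Option (Fin p)} {a : Fin G.m} {e : Fin p}
    (h : f a = some e) : G.nextN f a = G.tgt e := by
  simp [nextN, h]

lemma fstep_nextN {f : Fin G.m → Option (Fin p)} {a b : Fin G.m}
    (h : G.FStep f a b) : G.nextN f a = b := by
  obtain ⟨e, he, ht⟩ := h; rw [nextN_eq he, ht]

lemma walk_add (f : Fin G.m → Option (Fin p)) (a : Fin G.m) (s t : ℕ) :
    G.walk f a (s + t) = G.walk f (G.walk f a s) t := by
  induction t with
  | zero => rfl
  | succ t ih => exact congrArg (G.nextN f) ih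

lemma freach_walk (f : Fin G.m → Option (Fin p)) (a : Fin G.m) (s : ℕ) :
    G.FReach f a (G.walk f a s) := by
  induction s with
  | zero => exact Relation.ReflTransGen.refl
  | succ s ih =>
      rcases h : f (G.walk f a s) with _ | e
      · show G.FReach f a (G.nextN f _)
        rw [show G.nextN f (G.walk f a s) = G.walk f a s by simp [nextN, h]]
        exact ih
      · exact ih.tail ⟨e, h, (nextN_eq h).symm⟩

lemma freach_iff_walk {f : Fin G.m → Option (Fin p)} {a b : Fin G.m} :
    G.FReach f a b ↔ ∃ s, G.walk f a s = b := by
  constructor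
  · intro h
    induction h with
    | refl => exact ⟨0, rfl⟩
    | tail _ hstep ih =>
        obtain ⟨s, hs⟩ := ih
        exact ⟨s + 1, by rw [show G.walk f a (s+1) = G.nextN f (G.walk f a s) from rfl, hs,
          fstep_nextN hstep]⟩
  · rintro ⟨s, rfl⟩; exact freach_walk f a s

/-- first-passage time -/
noncomputable def fpt (G : ReactionGraph n p) (f : Fin G.m → Option (Fin p))
    (a b : Fin G.m) : ℕ :=
  if h : ∃ s, G.walk f a s = b then Nat.find h else 0

lemma walk_fpt {f : Fin G.m → Option (Fin p)} {a b : Fin G.m}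
    (h : ∃ s, G.walk f a s = b) : G.walk f a (G.fpt f a b) = b := by
  rw [fpt, dif_pos h]; exact Nat.find_spec h

lemma fpt_le {f : Fin G.m → Option (Fin p)} {a b : Fin G.m} {s : ℕ}
    (h : G.walk f a s = b) : G.fpt f a b ≤ s := by
  rw [fpt, dif_pos ⟨s, h⟩]; exact Nat.find_le h

lemma fpt_lt {f : Fin G.m → Option (Fin p)} {a b : Fin G.m}
    (h : ∃ s, G.walk f a s = b) (hab : a ≠ b) {e : Fin p} (he : f a = some e) :
    (∃ s, G.walk f (G.tgt e) s = b) ∧ G.fpt f (G.tgt e) b < G.fpt f a b := by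
  have hs : G.walk f a (G.fpt f a b) = b := walk_fpt h
  have hs0 : G.fpt f a b ≠ 0 := by
    intro h0; rw [h0] at hs; exact hab hs
  obtain ⟨s', hs'⟩ : ∃ s', G.fpt f a b = s' + 1 :=
    ⟨G.fpt f a b - 1, (Nat.succ_pred_eq_of_ne_zero hs0).symm⟩
  have h1 : G.walk f a (1 + s') = b := by rw [Nat.add_comm, ← hs']; exact hs
  rw [walk_add] at h1
  have hw1 : G.walk f a 1 = G.tgt e := nextN_eq he
  rw [hw1] at h1
  refine ⟨⟨s', h1⟩, lt_of_le_of_lt (fpt_le h1) ?_⟩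
  rw [hs']; exact Nat.lt_succ_self s'

end ReactionGraph
namespace ReactionGraph

variable {n p : ℕ} {G : ReactionGraph n p}

lemma walk_period {f : Fin G.m → Option (Fin p)} {i : Fin G.m} {t0 : ℕ}
    (h : G.walk f i t0 = i) (q r : ℕ) : G.walk f i (t0 * q + r) = G.walk f i r := by
  induction q with
  | zero => rw [Nat.mul_zero, Nat.zero_add]
  | succ q ih =>
      have : t0 * (q + 1) + r = t0 + (t0 * q + r) := by ring
      rw [this, walk_add, h, ih]

/-- Conditions defining the auxiliary set `U_i` of functional digraphs. -/
def UCond (G : ReactionGraph n p) (i : Fin G.m) (f : Fin G.m → Option (Fin p)) : Prop :=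
  (∀ k, G.Conn i k → ∃ e, f k = some e) ∧
  (∀ k e, f k = some e → G.src e = k ∧ G.Conn i k) ∧
  (∀ k, G.Conn i k → G.FReach f k i)

lemma UCond.conn_nextN {i : Fin G.m} {f : Fin G.m → Option (Fin p)} (hU : G.UCond i f)
    {k : Fin G.m} (hk : G.Conn i k) : G.Conn i (G.nextN f k) := by
  obtain ⟨e, he⟩ := hU.1 k hk
  rw [nextN_eq he]
  have hs := (hU.2.1 k e he).1
  exact G.conn_trans hk (hs ▸ G.conn_of_edge e)

lemma UCond.conn_walk {i : Fin G.m} {f : Fin G.m → Option (Fin p)} (hU : G.UCond i f)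
    {k : Fin G.m} (hk : G.Conn i k) (s : ℕ) : G.Conn i (G.walk f k s) := by
  induction s with
  | zero => exact hk
  | succ s ih => exact hU.conn_nextN ih

/-- The walk from `i` returns to `i`. -/
lemma UCond.returns {i : Fin G.m} {f : Fin G.m → Option (Fin p)} (hU : G.UCond i f) :
    ∃ t, 0 < t ∧ G.walk f i t = i := by
  have h1 : G.Conn i (G.walk f i 1) := hU.conn_walk (G.conn_refl i) 1
  obtain ⟨s, hs⟩ := freach_iff_walk.1 (hU.2.2 _ h1)
  refine ⟨1 + s, Nat.lt_of_lt_of_le Nat.one_pos (Nat.le_add_right 1 s), ?_⟩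
  rw [walk_add, hs]

/-- Any node with an edge into `i` that is reachable from `i` is the canonical node
`walk i (T-1)`. -/
lemma UCond.z_eq {i : Fin G.m} {f : Fin G.m → Option (Fin p)} (hU : G.UCond i f)
    {z : Fin G.m} (hr : G.FReach f i z) {e : Fin p} (he : f z = some e)
    (ht : G.tgt e = i) :
    z = G.walk f i (Nat.find hU.returns - 1) := by
  obtain ⟨s, hs⟩ := freach_iff_walk.1 hr
  have hnext : G.walk f i (s + 1) = i := by
    show G.nextN f (G.walk f i s) = i
    rw [hs, nextN_eq he, ht]
  set T := Nat.find hU.returns with hTdef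
  have hT0 : 0 < T := (Nat.find_spec hU.returns).1
  have hTw : G.walk f i T = i := (Nat.find_spec hU.returns).2
  -- r := (s+1) % T must be 0
  have hdiv : (s + 1) = T * ((s + 1) / T) + (s + 1) % T := (Nat.div_add_mod (s+1) T).symm
  have hwr : G.walk f i ((s + 1) % T) = i := by
    have := walk_period hTw ((s + 1) / T) ((s + 1) % T)
    rw [← hdiv] at this
    rw [← this, hnext]
  have hr0 : (s + 1) % T = 0 := by
    by_contra h0
    have hlt : (s + 1) % T < T := Nat.mod_lt _ hT0
    exact Nat.find_min hU.returns hlt ⟨Nat.pos_of_ne_zero h0, hwr⟩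
  -- so s ≡ T-1 mod T
  have hq1 : 1 ≤ (s + 1) / T := by
    rcases Nat.eq_zero_or_pos ((s+1)/T) with h0 | h0
    · rw [h0, Nat.mul_zero, hr0] at hdiv; omega
    · exact h0
  have hs_eq : s = T * ((s + 1) / T - 1) + (T - 1) := by
    obtain ⟨q', hq'⟩ : ∃ q', (s + 1) / T = q' + 1 := ⟨(s + 1) / T - 1, by omega⟩
    have hmul : T * ((s + 1) / T) = T * ((s + 1) / T - 1) + T := by
      rw [hq', Nat.add_sub_cancel, Nat.mul_add, Nat.mul_one]
    omega
  rw [← hs, hs_eq, walk_period hTw]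

/-! ### Spanning tree existence -/

variable (G)

def StepN (G : ReactionGraph n p) : ℕ → Fin G.m → Fin G.m → Prop
  | 0, a, b => a = b
  | (s+1), a, b => ∃ c, (∃ e, G.src e = a ∧ G.tgt e = c) ∧ StepN G s c b

variable {G}

lemma reach_stepN {a b : Fin G.m} (h : G.Reach a b) : ∃ s, G.StepN s a b := by
  induction h using Relation.ReflTransGen.head_induction_on with
  | refl => exact ⟨0, rfl⟩
  | head h' _ ih => obtain ⟨s, hs⟩ := ih; exact ⟨s + 1, ⟨_, h', hs⟩⟩

noncomputable def gd (G : ReactionGraph n p) (i k : Fin G.m) : ℕ :=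
  if h : ∃ s, G.StepN s k i then Nat.find h else 0

lemma gd_step {i k : Fin G.m} (hk : k ≠ i) (h : ∃ s, G.StepN s k i) :
    ∃ e, G.src e = k ∧ G.gd i (G.tgt e) < G.gd i k := by
  have hs : G.StepN (Nat.find h) k i := Nat.find_spec h
  have h0 : Nat.find h ≠ 0 := by
    intro h0; rw [h0] at hs; exact hk hs
  obtain ⟨s', hs'⟩ : ∃ s', Nat.find h = s' + 1 :=
    ⟨Nat.find h - 1, (Nat.succ_pred_eq_of_ne_zero h0).symm⟩
  rw [hs'] at hs
  obtain ⟨c, ⟨e, hesrc, hetgt⟩, hrest⟩ := hs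
  refine ⟨e, hesrc, ?_⟩
  have hc : ∃ s, G.StepN s (G.tgt e) i := ⟨s', hetgt ▸ hrest⟩
  have h1 : G.gd i (G.tgt e) ≤ s' := by
    rw [gd, dif_pos hc]; exact Nat.find_le (hetgt ▸ hrest)
  have h2 : G.gd i k = s' + 1 := by rw [gd, dif_pos h, hs']
  omega

/-- A weakly reversible graph has a spanning tree rooted at every node. -/
lemma exists_spanning_tree (hwr : G.WeaklyReversible) (i : Fin G.m) :
    ∃ t, G.IsSpanningTree i t := by
  have key : ∀ k : Fin G.m, k ≠ i → G.Conn i k →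
      ∃ e, G.src e = k ∧ G.gd i (G.tgt e) < G.gd i k := by
    intro k hk hc
    have hr : G.Reach k i := hwr k i (G.conn_symm hc)
    exact gd_step hk (reach_stepN hr)
  refine ⟨fun k => if h : k ≠ i ∧ G.Conn i k then some (Classical.choose (key k h.1 h.2))
    else none, ?_, ?_, ?_, ?_⟩
  · simp
  · intro k hk hc; exact ⟨_, dif_pos ⟨hk, hc⟩⟩
  · intro k e he
    dsimp only at he
    by_cases h : k ≠ i ∧ G.Conn i k
    · rw [dif_pos h] at he
      have := Classical.choose_spec (key k h.1 h.2)
      cases he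
      exact ⟨this.1, h.2, h.1⟩
    · rw [dif_neg h] at he; exact absurd he (by simp)
  · refine ⟨G.gd i, fun k e he => ?_⟩
    dsimp only at he
    by_cases h : k ≠ i ∧ G.Conn i k
    · rw [dif_pos h] at he
      have := Classical.choose_spec (key k h.1 h.2)
      cases he
      exact this.2
    · rw [dif_neg h] at he; exact absurd he (by simp)

lemma K_pos (hwr : G.WeaklyReversible) {κ : Fin p → ℝ} (hκ : ∀ e, 0 < κ e) (i : Fin G.m) :
    0 < G.K κ i := by
  obtain ⟨t, ht⟩ := exists_spanning_tree hwr i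
  have : Nonempty {t : Fin G.m → Option (Fin p) // G.IsSpanningTree i t} := ⟨⟨t, ht⟩⟩
  refine Finset.sum_pos (fun t' _ => Finset.prod_pos fun k _ => ?_) Finset.univ_nonempty
  rcases h : t'.val k with _ | e
  · simp [h]
  · simp [h, hκ e]

end ReactionGraph
namespace ReactionGraph

variable {n p : ℕ} {G : ReactionGraph n p}

lemma tree_reach_update {j : Fin G.m} {t f : Fin G.m → Option (Fin p)}
    (ht : G.IsSpanningTree j t) (hf : ∀ k, k ≠ j → f k = t k) :
    ∀ k, G.Conn j k → G.FReach f k j := by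
  obtain ⟨h0, hex, hprop, d, hd⟩ := ht
  have main : ∀ s k, d k ≤ s → G.Conn j k → G.FReach f k j := by
    intro s
    induction s with
    | zero =>
        intro k hk hc
        by_cases hkj : k = j
        · subst hkj; exact .refl
        · obtain ⟨e, he⟩ := hex k hkj hc
          exact absurd (lt_of_lt_of_le (hd k e he) hk) (Nat.not_lt_zero _)
    | succ s ih =>
        intro k hk hc
        by_cases hkj : k = j
        · subst hkj; exact .refl
        · obtain ⟨e, he⟩ := hex k hkj hc
          have hsrc := hprop k e he
          have hconn : G.Conn j (G.tgt e) := G.conn_trans hc (hsrc.1 ▸ G.conn_of_edge e)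
          have hih : G.FReach f (G.tgt e) j :=
            ih (G.tgt e) (by have := hd k e he; omega) hconn
          exact Relation.ReflTransGen.head ⟨e, (hf k hkj).trans he, rfl⟩ hih
  exact fun k => main (d k) k le_rfl

/-- products of rate constants over an edge-assignment -/
noncomputable def wprod (κ : Fin p → ℝ) (t : Fin G.m → Option (Fin p)) : ℝ :=
  ∏ k, (t k).elim 1 κ

lemma K_eq_sum_wprod (κ : Fin p → ℝ) (i : Fin G.m) :
    G.K κ i = ∑ t : {t : Fin G.m → Option (Fin p) // G.IsSpanningTree i t}, wprod κ t.val := rfl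

lemma wprod_update {κ : Fin p → ℝ} {t : Fin G.m → Option (Fin p)} {j : Fin G.m}
    (h : t j = none) (e : Fin p) :
    wprod κ (Function.update t j (some e)) = κ e * wprod κ t := by
  have key : (fun k => (Function.update t j (some e) k).elim 1 κ)
      = Function.update (fun k => (t k).elim 1 κ) j (κ e) := by
    funext k
    by_cases hk : k = j
    · subst hk; simp
    · simp [Function.update_of_ne hk]
  show ∏ k, (Function.update t j (some e) k).elim 1 κ = κ e * ∏ k, (t k).elim 1 κ
  calc ∏ k, (Function.update t j (some e) k).elim 1 κ
      = ∏ k, Function.update (fun k => (t k).elim 1 κ) j (κ e) k := by rw [key]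
    _ = κ e * ∏ k ∈ Finset.univ \ {j}, (t k).elim 1 κ :=
        Finset.prod_update_of_mem (Finset.mem_univ j) _ _
    _ = κ e * ∏ k, (t k).elim 1 κ := by
        rw [Finset.prod_eq_mul_prod_sdiff_singleton_of_mem (Finset.mem_univ j)
          (fun k => (t k).elim 1 κ), h]
        simp

variable (G) in
abbrev TreesA (i : Fin G.m) : Type _ :=
  {q : Fin p × (Fin G.m → Option (Fin p)) // G.tgt q.1 = i ∧ G.IsSpanningTree (G.src q.1) q.2}

variable (G) in
abbrev TreesB (i : Fin G.m) : Type _ :=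
  {q : Fin p × (Fin G.m → Option (Fin p)) // G.src q.1 = i ∧ G.IsSpanningTree i q.2}

variable (G) in
abbrev UU (i : Fin G.m) : Type _ := {f : Fin G.m → Option (Fin p) // G.UCond i f}

lemma memUU_A {i : Fin G.m} {e : Fin p} {t : Fin G.m → Option (Fin p)}
    (hte : G.tgt e = i) (ht : G.IsSpanningTree (G.src e) t) :
    G.UCond i (Function.update t (G.src e) (some e)) := by
  set j := G.src e with hj
  have hconn_ji : G.Conn j i := hte ▸ G.conn_of_edge e
  refine ⟨?_, ?_, ?_⟩
  · intro k hk
    by_cases hkj : k = j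
    · subst hkj; exact ⟨e, Function.update_self _ _ _⟩
    · rw [Function.update_of_ne hkj]
      exact ht.2.1 k hkj (G.conn_trans hconn_ji hk)
  · intro k e' he'
    by_cases hkj : k = j
    · subst hkj
      rw [Function.update_self] at he'
      cases he'
      exact ⟨rfl, G.conn_symm hconn_ji⟩
    · rw [Function.update_of_ne hkj] at he'
      have := ht.2.2.1 k e' he'
      exact ⟨this.1, G.conn_trans (G.conn_symm hconn_ji) this.2.1⟩
  · intro k hk
    have h1 : G.FReach (Function.update t j (some e)) k j :=
      tree_reach_update ht (fun k hkj => Function.update_of_ne hkj _ _) k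
        (G.conn_trans hconn_ji hk)
    exact h1.tail ⟨e, Function.update_self _ _ _, hte⟩

lemma memUU_B {i : Fin G.m} {e : Fin p} {t : Fin G.m → Option (Fin p)}
    (hse : G.src e = i) (ht : G.IsSpanningTree i t) :
    G.UCond i (Function.update t i (some e)) := by
  refine ⟨?_, ?_, ?_⟩
  · intro k hk
    by_cases hki : k = i
    · subst hki; exact ⟨e, Function.update_self _ _ _⟩
    · rw [Function.update_of_ne hki]
      exact ht.2.1 k hki hk
  · intro k e' he'
    by_cases hki : k = i
    · subst hki
      rw [Function.update_self] at he'
      cases he'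
      exact ⟨hse, G.conn_refl _⟩
    · rw [Function.update_of_ne hki] at he'
      have := ht.2.2.1 k e' he'
      exact ⟨this.1, this.2.1⟩
  · intro k hk
    exact tree_reach_update ht (fun k hki => Function.update_of_ne hki _ _) k hk

variable (G) in
noncomputable def phiA (i : Fin G.m) : G.TreesA i → G.UU i := fun q =>
  ⟨Function.update q.val.2 (G.src q.val.1) (some q.val.1), memUU_A q.prop.1 q.prop.2⟩

variable (G) in
noncomputable def phiB (i : Fin G.m) : G.TreesB i → G.UU i := fun q =>
  ⟨Function.update q.val.2 i (some q.val.1), memUU_B q.prop.1 q.prop.2⟩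

end ReactionGraph
namespace ReactionGraph

variable {n p : ℕ} {G : ReactionGraph n p}

lemma phiA_bijective (i : Fin G.m) : Function.Bijective (G.phiA i) := by
  constructor
  · rintro ⟨⟨e, t⟩, hte, ht⟩ ⟨⟨e', t'⟩, hte', ht'⟩ heq
    dsimp only at hte ht hte' ht'
    have hval : Function.update t (G.src e) (some e)
        = Function.update t' (G.src e') (some e') := congrArg Subtype.val heq
    have hU : G.UCond i (Function.update t (G.src e) (some e)) := memUU_A hte ht
    have hconn_ji : G.Conn (G.src e) i := hte ▸ G.conn_of_edge e
    have hconn_j'i : G.Conn (G.src e') i := hte' ▸ G.conn_of_edge e'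
    have hFj : Function.update t (G.src e) (some e) (G.src e) = some e :=
      Function.update_self _ _ _
    have hFj' : Function.update t (G.src e) (some e) (G.src e') = some e' := by
      rw [hval]; exact Function.update_self _ _ _
    have hreach_j : G.FReach (Function.update t (G.src e) (some e)) i (G.src e) :=
      tree_reach_update ht (fun k hk => Function.update_of_ne hk _ _) i hconn_ji
    have hreach_j' : G.FReach (Function.update t (G.src e) (some e)) i (G.src e') := by
      rw [hval]
      exact tree_reach_update ht' (fun k hk => Function.update_of_ne hk _ _) i hconn_j'i
    have hz : G.src e = G.src e' := by
      rw [hU.z_eq hreach_j hFj hte, hU.z_eq hreach_j' hFj' hte']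
    have hee' : e = e' := by
      rw [← hz] at hFj'
      rw [hFj] at hFj'
      exact Option.some_injective _ hFj'
    have htt' : t = t' := by
      funext k
      by_cases hk : k = G.src e
      · subst hk
        rw [ht.1, hz, ht'.1]
      · have h1 : Function.update t (G.src e) (some e) k = t k :=
          Function.update_of_ne hk _ _
        have h2 : Function.update t (G.src e) (some e) k = t' k := by
          rw [hval]; exact Function.update_of_ne (by rw [← hz]; exact hk) _ _
        rw [← h1, h2]
    apply Subtype.ext
    exact Prod.ext hee' htt'
  · rintro ⟨f, hU⟩
    have hT := hU.returns
    have hT0 : 0 < Nat.find hT := (Nat.find_spec hT).1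
    have hTw : G.walk f i (Nat.find hT) = i := (Nat.find_spec hT).2
    have hconn_z : G.Conn i (G.walk f i (Nat.find hT - 1)) :=
      hU.conn_walk (G.conn_refl i) (Nat.find hT - 1)
    obtain ⟨e', he'⟩ := hU.1 _ hconn_z
    have hsrc' : G.src e' = G.walk f i (Nat.find hT - 1) := (hU.2.1 _ e' he').1
    have htgt' : G.tgt e' = i := by
      have h1 : G.walk f i (Nat.find hT - 1 + 1)
          = G.nextN f (G.walk f i (Nat.find hT - 1)) := rfl
      rw [show Nat.find hT - 1 + 1 = Nat.find hT from by omega] at h1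
      rw [← nextN_eq he', ← h1, hTw]
    have hreach_iz : G.FReach f i (G.walk f i (Nat.find hT - 1)) :=
      freach_walk f i (Nat.find hT - 1)
    have htree : G.IsSpanningTree (G.walk f i (Nat.find hT - 1))
        (Function.update f (G.walk f i (Nat.find hT - 1)) none) := by
      refine ⟨Function.update_self _ _ _, ?_, ?_, ?_⟩
      · intro k hk hc
        rw [Function.update_of_ne hk]
        exact hU.1 k (G.conn_trans hconn_z hc)
      · intro k e he
        by_cases hk : k = G.walk f i (Nat.find hT - 1)
        · rw [hk, Function.update_self] at he; exact absurd he (by simp)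
        · rw [Function.update_of_ne hk] at he
          have := hU.2.1 k e he
          exact ⟨this.1, G.conn_trans (G.conn_symm hconn_z) this.2, hk⟩
      · refine ⟨fun k => G.fpt f k (G.walk f i (Nat.find hT - 1)), fun k e he => ?_⟩
        by_cases hk : k = G.walk f i (Nat.find hT - 1)
        · rw [hk, Function.update_self] at he; exact absurd he (by simp)
        · rw [Function.update_of_ne hk] at he
          have hck : G.Conn i k := (hU.2.1 k e he).2
          have hrkz : G.FReach f k (G.walk f i (Nat.find hT - 1)) :=
            (hU.2.2 k hck).trans hreach_iz
          exact (fpt_lt (freach_iff_walk.1 hrkz) hk he).2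
    refine ⟨⟨(e', Function.update f (G.walk f i (Nat.find hT - 1)) none), htgt',
      by dsimp only; rw [hsrc']; exact htree⟩, ?_⟩
    apply Subtype.ext
    show Function.update (Function.update f (G.walk f i (Nat.find hT - 1)) none)
      (G.src e') (some e') = f
    rw [hsrc', Function.update_idem, ← he', Function.update_eq_self]

lemma phiB_bijective (i : Fin G.m) : Function.Bijective (G.phiB i) := by
  constructor
  · rintro ⟨⟨e, t⟩, hse, ht⟩ ⟨⟨e', t'⟩, hse', ht'⟩ heq
    dsimp only at hse ht hse' ht'
    have hval : Function.update t i (some e) = Function.update t' i (some e') :=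
      congrArg Subtype.val heq
    have h1 : Function.update t i (some e) i = some e := Function.update_self _ _ _
    have h2 : Function.update t' i (some e') i = some e' := Function.update_self _ _ _
    have hee' : e = e' := by
      rw [hval, h2] at h1; exact (Option.some_injective _ h1).symm
    have htt' : t = t' := by
      funext k
      by_cases hk : k = i
      · rw [hk, ht.1, ht'.1]
      · have g1 : Function.update t i (some e) k = t k := Function.update_of_ne hk _ _
        have g2 : Function.update t' i (some e') k = t' k := Function.update_of_ne hk _ _
        rw [← g1, hval, g2]
    apply Subtype.ext
    exact Prod.ext hee' htt'
  · rintro ⟨f, hU⟩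
    obtain ⟨e₀, he₀⟩ := hU.1 i (G.conn_refl i)
    have hsrc₀ : G.src e₀ = i := (hU.2.1 i e₀ he₀).1
    have htree : G.IsSpanningTree i (Function.update f i none) := by
      refine ⟨Function.update_self _ _ _, ?_, ?_, ?_⟩
      · intro k hk hc
        rw [Function.update_of_ne hk]
        exact hU.1 k hc
      · intro k e he
        by_cases hk : k = i
        · rw [hk, Function.update_self] at he; exact absurd he (by simp)
        · rw [Function.update_of_ne hk] at he
          have := hU.2.1 k e he
          exact ⟨this.1, this.2, hk⟩
      · refine ⟨fun k => G.fpt f k i, fun k e he => ?_⟩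
        by_cases hk : k = i
        · rw [hk, Function.update_self] at he; exact absurd he (by simp)
        · rw [Function.update_of_ne hk] at he
          have hck : G.Conn i k := (hU.2.1 k e he).2
          exact (fpt_lt (freach_iff_walk.1 (hU.2.2 k hck)) hk he).2
    refine ⟨⟨(e₀, Function.update f i none), hsrc₀, htree⟩, ?_⟩
    apply Subtype.ext
    show Function.update (Function.update f i none) i (some e₀) = f
    rw [Function.update_idem, ← he₀, Function.update_eq_self]

end ReactionGraph
namespace ReactionGraph

variable {n p : ℕ} {G : ReactionGraph n p}

variable (G) in
def eqvA (i : Fin G.m) :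
    (Σ e : {e : Fin p // G.tgt e = i},
      {t : Fin G.m → Option (Fin p) // G.IsSpanningTree (G.src e.val) t}) ≃ G.TreesA i where
  toFun s := ⟨(s.1.val, s.2.val), s.1.prop, s.2.prop⟩
  invFun q := ⟨⟨q.val.1, q.prop.1⟩, ⟨q.val.2, q.prop.2⟩⟩
  left_inv s := rfl
  right_inv q := rfl

variable (G) in
def eqvB (i : Fin G.m) :
    ({e : Fin p // G.src e = i} ×
      {t : Fin G.m → Option (Fin p) // G.IsSpanningTree i t}) ≃ G.TreesB i where
  toFun s := ⟨(s.1.val, s.2.val), s.1.prop, s.2.prop⟩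
  invFun q := ⟨⟨q.val.1, q.prop.1⟩, ⟨q.val.2, q.prop.2⟩⟩
  left_inv s := rfl
  right_inv q := rfl

lemma wprod_phiA (κ : Fin p → ℝ) {i : Fin G.m} (q : G.TreesA i) :
    wprod κ ((G.phiA i q).val) = κ q.val.1 * wprod κ q.val.2 :=
  wprod_update q.prop.2.1 _

lemma wprod_phiB (κ : Fin p → ℝ) {i : Fin G.m} (q : G.TreesB i) :
    wprod κ ((G.phiB i q).val) = κ q.val.1 * wprod κ q.val.2 :=
  wprod_update q.prop.2.1 _

lemma sum_UU_A (κ : Fin p → ℝ) (i : Fin G.m) :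
    ∑ e ∈ Finset.univ.filter (fun e => G.tgt e = i), κ e * G.K κ (G.src e)
      = ∑ f : G.UU i, wprod κ f.val := by
  have h1 : ∑ e ∈ Finset.univ.filter (fun e => G.tgt e = i), κ e * G.K κ (G.src e)
      = ∑ e : {e : Fin p // G.tgt e = i}, κ e.val * G.K κ (G.src e.val) :=
    Finset.sum_subtype _ (by simp) _
  rw [h1]
  have h2 : ∀ e : {e : Fin p // G.tgt e = i}, κ e.val * G.K κ (G.src e.val)
      = ∑ t : {t : Fin G.m → Option (Fin p) // G.IsSpanningTree (G.src e.val) t},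
          κ e.val * wprod κ t.val := by
    intro e
    rw [K_eq_sum_wprod, Finset.mul_sum]
  rw [Finset.sum_congr rfl (fun e _ => h2 e)]
  have h3 : ∑ q ∈ ((Finset.univ : Finset {e : Fin p // G.tgt e = i}).sigma
        (fun e => (Finset.univ : Finset
          {t : Fin G.m → Option (Fin p) // G.IsSpanningTree (G.src e.val) t}))),
        κ q.1.val * wprod κ q.2.val
      = ∑ e : {e : Fin p // G.tgt e = i},
          ∑ t : {t : Fin G.m → Option (Fin p) // G.IsSpanningTree (G.src e.val) t},
            κ e.val * wprod κ t.val := Finset.sum_sigma _ _ _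
  have h4 : ∑ q : (Σ e : {e : Fin p // G.tgt e = i},
        {t : Fin G.m → Option (Fin p) // G.IsSpanningTree (G.src e.val) t}),
        κ q.1.val * wprod κ q.2.val
      = ∑ q ∈ ((Finset.univ : Finset {e : Fin p // G.tgt e = i}).sigma
        (fun e => (Finset.univ : Finset
          {t : Fin G.m → Option (Fin p) // G.IsSpanningTree (G.src e.val) t}))),
        κ q.1.val * wprod κ q.2.val := by
    rw [Finset.univ_sigma_univ]
  rw [← h3, ← h4]
  exact (Fintype.sum_equiv (G.eqvA i) _ (fun q => κ q.val.1 * wprod κ q.val.2)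
      (fun s => rfl)).trans
    (Fintype.sum_bijective (G.phiA i) (phiA_bijective i) _ _
      (fun q => (wprod_phiA κ q).symm))

lemma sum_UU_B (κ : Fin p → ℝ) (i : Fin G.m) :
    ∑ e ∈ Finset.univ.filter (fun e => G.src e = i), κ e * G.K κ i
      = ∑ f : G.UU i, wprod κ f.val := by
  have h1 : ∑ e ∈ Finset.univ.filter (fun e => G.src e = i), κ e * G.K κ i
      = ∑ e : {e : Fin p // G.src e = i}, κ e.val * G.K κ i :=
    Finset.sum_subtype _ (by simp) _
  rw [h1]
  have h2 : ∀ e : {e : Fin p // G.src e = i}, κ e.val * G.K κ i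
      = ∑ t : {t : Fin G.m → Option (Fin p) // G.IsSpanningTree i t},
          κ e.val * wprod κ t.val := by
    intro e
    rw [K_eq_sum_wprod, Finset.mul_sum]
  rw [Finset.sum_congr rfl (fun e _ => h2 e)]
  have h3 : ∑ q ∈ ((Finset.univ : Finset {e : Fin p // G.src e = i}) ×ˢ
        (Finset.univ : Finset {t : Fin G.m → Option (Fin p) // G.IsSpanningTree i t})),
        κ q.1.val * wprod κ q.2.val
      = ∑ e : {e : Fin p // G.src e = i},
          ∑ t : {t : Fin G.m → Option (Fin p) // G.IsSpanningTree i t},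
            κ e.val * wprod κ t.val := Finset.sum_product _ _ _
  have h4 : ∑ q : ({e : Fin p // G.src e = i} ×
        {t : Fin G.m → Option (Fin p) // G.IsSpanningTree i t}),
        κ q.1.val * wprod κ q.2.val
      = ∑ q ∈ ((Finset.univ : Finset {e : Fin p // G.src e = i}) ×ˢ
        (Finset.univ : Finset {t : Fin G.m → Option (Fin p) // G.IsSpanningTree i t})),
        κ q.1.val * wprod κ q.2.val := by
    rw [Finset.univ_product_univ]
  rw [← h3, ← h4]
  exact (Fintype.sum_equiv (G.eqvB i) _ (fun q => κ q.val.1 * wprod κ q.val.2)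
      (fun s => rfl)).trans
    (Fintype.sum_bijective (G.phiB i) (phiB_bijective i) _ _
      (fun q => (wprod_phiB κ q).symm))

variable (G) in
/-- node balance for a vector of node values -/
def NBal (κ : Fin p → ℝ) (v : Fin G.m → ℝ) : Prop :=
  ∀ i, ∑ e ∈ Finset.univ.filter (fun e => G.tgt e = i), κ e * v (G.src e)
      = ∑ e ∈ Finset.univ.filter (fun e => G.src e = i), κ e * v i

lemma NBal_K (κ : Fin p → ℝ) : G.NBal κ (G.K κ) := fun i =>
  (sum_UU_A κ i).trans (sum_UU_B κ i).symm

lemma steady_iff_NBal (κ : Fin p → ℝ) (v : Fin G.m → ℝ) :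
    G.inc.mulVec (fun e => κ e * v (G.src e)) = 0 ↔ G.NBal κ v := by
  have key : ∀ i, G.inc.mulVec (fun e => κ e * v (G.src e)) i
      = (∑ e ∈ Finset.univ.filter (fun e => G.tgt e = i), κ e * v (G.src e))
        - ∑ e ∈ Finset.univ.filter (fun e => G.src e = i), κ e * v i := by
    intro i
    show ∑ e, ((if G.tgt e = i then (1:ℝ) else 0) - if G.src e = i then (1:ℝ) else 0)
        * (κ e * v (G.src e)) = _
    simp only [sub_mul, ite_mul, one_mul, zero_mul]
    rw [Finset.sum_sub_distrib]
    congr 1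
    · rw [Finset.sum_filter]
    · rw [Finset.sum_filter]
      refine Finset.sum_congr rfl fun e _ => ?_
      split_ifs with h
      · rw [h]
      · rfl
  constructor
  · intro h i
    have := congrFun h i
    rw [key i] at this
    have : _ - _ = (0 : ℝ) := this
    linarith [this]
  · intro h
    funext i
    rw [key i, h i]
    simp
end ReactionGraph
namespace ReactionGraph

variable {n p : ℕ} {G : ReactionGraph n p}

lemma NBal_ratio (hwr : G.WeaklyReversible) {κ : Fin p → ℝ} (hκ : ∀ e, 0 < κ e)
    {v w : Fin G.m → ℝ} (hv : G.NBal κ v) (hw : G.NBal κ w)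
    (hwpos : ∀ k, 0 < w k)
    {j k : Fin G.m} (hjk : G.Conn j k) : v j * w k = v k * w j := by
  classical
  set r : Fin G.m → ℝ := fun a => v a / w a with hr
  set S : Finset (Fin G.m) := Finset.univ.filter (fun a => G.Conn j a) with hS
  have hjS : j ∈ S := Finset.mem_filter.2 ⟨Finset.mem_univ _, G.conn_refl j⟩
  obtain ⟨a, haS, hamax⟩ := Finset.exists_max_image S r ⟨j, hjS⟩
  have haconn : G.Conn j a := (Finset.mem_filter.1 haS).2
  -- key: in-neighbours of a max node are max
  have key : ∀ c, G.Conn j c → r c = r a → ∀ e, G.tgt e = c → r (G.src e) = r a := by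
    intro c hjc hrc e hec
    have hvc : v c = r a * w c := by
      rw [← hrc]
      show v c = v c / w c * w c
      rw [div_mul_cancel₀ _ (hwpos c).ne']
    have hsum0 : ∑ e' ∈ Finset.univ.filter (fun e' => G.tgt e' = c),
        κ e' * (r a * w (G.src e') - v (G.src e')) = 0 := by
      have expand : ∑ e' ∈ Finset.univ.filter (fun e' => G.tgt e' = c),
          κ e' * (r a * w (G.src e') - v (G.src e'))
          = r a * (∑ e' ∈ Finset.univ.filter (fun e' => G.tgt e' = c), κ e' * w (G.src e'))
            - ∑ e' ∈ Finset.univ.filter (fun e' => G.tgt e' = c), κ e' * v (G.src e') := by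
        rw [Finset.mul_sum, ← Finset.sum_sub_distrib]
        exact Finset.sum_congr rfl fun e' _ => by ring
      rw [expand, hw c, hv c, Finset.mul_sum, ← Finset.sum_sub_distrib]
      apply Finset.sum_eq_zero
      intro e' _
      rw [hvc]; ring
    have hnn : ∀ e' ∈ Finset.univ.filter (fun e' => G.tgt e' = c),
        0 ≤ κ e' * (r a * w (G.src e') - v (G.src e')) := by
      intro e' he'
      have htc : G.tgt e' = c := (Finset.mem_filter.1 he').2
      have hconn_src : G.Conn j (G.src e') :=
        G.conn_trans hjc (G.conn_symm (htc ▸ G.conn_of_edge e'))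
      have hmem : G.src e' ∈ S := Finset.mem_filter.2 ⟨Finset.mem_univ _, hconn_src⟩
      have hle : r (G.src e') ≤ r a := hamax _ hmem
      have : v (G.src e') ≤ r a * w (G.src e') := by
        have := (div_le_iff₀ (hwpos (G.src e'))).1 hle
        linarith [this]
      exact mul_nonneg (hκ e').le (sub_nonneg.2 this)
    have hzero := (Finset.sum_eq_zero_iff_of_nonneg hnn).1 hsum0 e
      (Finset.mem_filter.2 ⟨Finset.mem_univ _, hec⟩)
    have hterm : r a * w (G.src e) - v (G.src e) = 0 := by
      have hκe := (hκ e).ne'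
      rcases mul_eq_zero.1 hzero with h | h
      · exact absurd h hκe
      · exact h
    have : v (G.src e) = r a * w (G.src e) := by linarith
    rw [hr]
    show v (G.src e) / w (G.src e) = r a
    rw [this, mul_div_assoc, div_self (hwpos (G.src e)).ne', mul_one]
  -- propagate backwards along reachability
  have main : ∀ b, G.Conn j b → G.Reach b a → r b = r a := by
    intro b hb hr'
    induction hr' using Relation.ReflTransGen.head_induction_on with
    | refl => rfl
    | @head b' c hstep hrest ih =>
        obtain ⟨e, hsrc, htgt⟩ := hstep
        have hjc : G.Conn j c := G.conn_trans hb (hsrc ▸ htgt ▸ G.conn_of_edge e)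
        have hrc := ih hjc
        have := key c hjc hrc e htgt
        rw [hsrc] at this
        exact this
  have hrj : r j = r a := main j (G.conn_refl j) (hwr j a haconn)
  have hrk : r k = r a :=
    main k hjk (hwr k a (G.conn_trans (G.conn_symm hjk) haconn))
  have : r j = r k := hrj.trans hrk.symm
  rw [hr] at this
  have h2 : v j / w j = v k / w k := this
  rw [div_eq_div_iff (hwpos j).ne' (hwpos k).ne'] at h2
  linarith [h2]

end ReactionGraph
namespace ReactionGraph

variable {n p : ℕ} {G : ReactionGraph n p}

noncomputable def dotL (c : Fin G.m → ℝ) : (Fin G.m → ℝ) →ₗ[ℝ] ℝ where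
  toFun u := ∑ j, u j * c j
  map_add' u v := by
    simp only [Pi.add_apply, add_mul]
    rw [Finset.sum_add_distrib]
  map_smul' a u := by
    simp only [Pi.smul_apply, smul_eq_mul, RingHom.id_apply]
    rw [Finset.mul_sum]
    exact Finset.sum_congr rfl fun j _ => by ring

lemma monomial_pos {x : Fin n → ℝ} (hx : Pos x) (y : Fin n → ℕ) : 0 < monomial x y :=
  Finset.prod_pos fun i _ => pow_pos (hx i) _

lemma psi_inl {u : Fin G.m → ℝ} (hu : u ∈ G.kerPsi) (i : Fin n) :
    ∑ j, (G.Y j i : ℝ) * u j = 0 := by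
  have := congrFun (LinearMap.mem_ker.1 hu) (Sum.inl i)
  simpa [psiMat, Matrix.mulVecLin_apply, Matrix.mulVec, dotProduct] using this

lemma psi_inr {u : Fin G.m → ℝ} (hu : u ∈ G.kerPsi) (i₀ : Fin G.m) :
    ∑ j ∈ Finset.univ.filter (fun j => G.Conn i₀ j), u j = 0 := by
  have h := congrFun (LinearMap.mem_ker.1 hu) (Sum.inr i₀)
  have h2 : ∑ j, (if G.Conn i₀ j then (1:ℝ) else 0) * u j = 0 := by
    simpa [psiMat, Matrix.mulVecLin_apply, Matrix.mulVec, dotProduct] using h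
  rw [← h2, Finset.sum_filter]
  exact Finset.sum_congr rfl fun j _ => by split_ifs <;> simp

/-- sum against a vector with zero component-sums, of a function constant on components -/
lemma sum_mul_comp_const {u g : Fin G.m → ℝ}
    (hg : ∀ j k, G.Conn j k → g j = g k)
    (hu : ∀ i₀, ∑ k ∈ Finset.univ.filter (fun k => G.Conn i₀ k), u k = 0) :
    ∑ j, u j * g j = 0 := by
  classical
  haveI : DecidableEq (Quotient G.connSetoid) := Classical.decEq _
  rw [← Finset.sum_fiberwise Finset.univ
    (fun j => (Quotient.mk G.connSetoid j : Quotient G.connSetoid)) (fun j => u j * g j)]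
  apply Finset.sum_eq_zero
  intro q _
  have hfib : Finset.univ.filter
        (fun j => (Quotient.mk G.connSetoid j : Quotient G.connSetoid) = q)
      = Finset.univ.filter (fun j => G.Conn q.out j) := by
    ext j
    simp only [Finset.mem_filter, Finset.mem_univ, true_and]
    constructor
    · intro hmk
      have hex : G.Conn j q.out := Quotient.exact (hmk.trans (Quotient.out_eq q).symm)
      exact G.conn_symm hex
    · intro hc
      rw [← Quotient.out_eq q]
      exact Quotient.sound (G.conn_symm hc)
  rw [hfib]
  have : ∀ j ∈ Finset.univ.filter (fun j => G.Conn q.out j), u j * g j = u j * g q.out := by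
    intro j hj
    rw [hg q.out j (Finset.mem_filter.1 hj).2]
  rw [Finset.sum_congr rfl this, ← Finset.sum_mul, hu q.out, zero_mul]

/-- forward: a positive node balanced steady state forces the log-relations -/
lemma forward_key (hwr : G.WeaklyReversible) {κ : Fin p → ℝ} (hκ : ∀ e, 0 < κ e)
    {x : Fin n → ℝ} (hx : Pos x) (hnb : G.NBal κ (fun j => monomial x (G.Y j)))
    {u : Fin G.m → ℝ} (hu : u ∈ G.kerPsi) :
    ∑ j, u j * Real.log (G.K κ j) = 0 := by
  classical
  set wv : Fin G.m → ℝ := fun j => monomial x (G.Y j) with hwv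
  have hwvpos : ∀ j, 0 < wv j := fun j => monomial_pos hx _
  have hKpos : ∀ j, 0 < G.K κ j := K_pos hwr hκ
  set g : Fin G.m → ℝ := fun j => Real.log (wv j) - Real.log (G.K κ j) with hgdef
  have hgconst : ∀ j k, G.Conn j k → g j = g k := by
    intro j k hjk
    have hratio : wv j * G.K κ k = wv k * G.K κ j :=
      NBal_ratio hwr hκ hnb (NBal_K κ) hKpos hjk
    have hlog := congrArg Real.log hratio
    rw [Real.log_mul (hwvpos j).ne' (hKpos k).ne',
      Real.log_mul (hwvpos k).ne' (hKpos j).ne'] at hlog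
    simp only [hgdef]
    linarith [hlog]
  have hlogwv : ∀ j, Real.log (wv j) = ∑ i, (G.Y j i : ℝ) * Real.log (x i) := by
    intro j
    rw [hwv]
    show Real.log (∏ i, x i ^ G.Y j i) = _
    rw [Real.log_prod (fun i _ => (pow_pos (hx i) _).ne')]
    exact Finset.sum_congr rfl fun i _ => Real.log_pow _ _
  have hsplit : ∀ j, Real.log (G.K κ j) = Real.log (wv j) - g j := fun j => by
    simp [hgdef]
  calc ∑ j, u j * Real.log (G.K κ j)
      = ∑ j, (u j * Real.log (wv j) - u j * g j) := by
        refine Finset.sum_congr rfl fun j _ => ?_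
        rw [hsplit j]; ring
    _ = ∑ j, u j * Real.log (wv j) - ∑ j, u j * g j := Finset.sum_sub_distrib _ _
    _ = 0 - 0 := by
        congr 1
        · calc ∑ j, u j * Real.log (wv j)
              = ∑ j, ∑ i, (G.Y j i : ℝ) * Real.log (x i) * u j := by
                refine Finset.sum_congr rfl fun j _ => ?_
                rw [hlogwv j, Finset.mul_sum]
                exact Finset.sum_congr rfl fun i _ => by ring
            _ = ∑ i, ∑ j, (G.Y j i : ℝ) * Real.log (x i) * u j := Finset.sum_comm
            _ = ∑ i, Real.log (x i) * ∑ j, (G.Y j i : ℝ) * u j := by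
                refine Finset.sum_congr rfl fun i _ => ?_
                rw [Finset.mul_sum]
                exact Finset.sum_congr rfl fun j _ => by ring
            _ = 0 := by
                refine Finset.sum_eq_zero fun i _ => ?_
                rw [psi_inl hu i, mul_zero]
        · exact sum_mul_comp_const hgconst (psi_inr hu)
    _ = 0 := sub_zero 0

/-- backward: the log-relations give a positive node balanced steady state -/
lemma backward_key (hwr : G.WeaklyReversible) {κ : Fin p → ℝ} (hκ : ∀ e, 0 < κ e)
    (h : ∀ u ∈ G.kerPsi, ∑ j, u j * Real.log (G.K κ j) = 0) :
    ∃ x : Fin n → ℝ, Pos x ∧ G.NBal κ (fun j => monomial x (G.Y j)) := by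
  classical
  have hKpos : ∀ j, 0 < G.K κ j := K_pos hwr hκ
  set v₀ : Fin G.m → ℝ := fun j => Real.log (G.K κ j) with hv₀
  -- orthogonality: v₀ ∈ range of Ψᵀ
  obtain ⟨z, hz⟩ : ∃ z, G.psiMat.transpose.mulVec z = v₀ := by
    set E := EuclideanSpace ℝ (Fin G.m)
    let toE : (Fin G.m → ℝ) ≃ₗ[ℝ] E := (WithLp.linearEquiv 2 ℝ (Fin G.m → ℝ)).symm
    have htoE : ∀ (y : Fin G.m → ℝ) (j : Fin G.m), toE y j = y j := fun y j => rfl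
    have hinner : ∀ y v : Fin G.m → ℝ, (inner ℝ (toE y) (toE v) : ℝ) = ∑ j, y j * v j := by
      intro y v
      rw [PiLp.inner_apply]
      exact Finset.sum_congr rfl fun j _ => by
        rw [RCLike.inner_apply, htoE, htoE]; simp; ring
    set W : Submodule ℝ E :=
      (LinearMap.range G.psiMat.transpose.mulVecLin).map (toE : (Fin G.m → ℝ) →ₗ[ℝ] E) with hW
    have hWperp : Wᗮ = G.kerPsi.map (toE : (Fin G.m → ℝ) →ₗ[ℝ] E) := by
      ext y
      rw [Submodule.mem_orthogonal]
      constructor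
      · intro hy
        rw [Submodule.mem_map]
        refine ⟨toE.symm y, ?_, by simp⟩
        rw [kerPsi, LinearMap.mem_ker]
        have hall : ∀ z', dotProduct z' (G.psiMat.mulVec (toE.symm y)) = 0 := by
          intro z'
          have hmem : toE (G.psiMat.transpose.mulVec z') ∈ W := by
            rw [hW]
            exact Submodule.mem_map_of_mem ⟨z', rfl⟩
          have hthis := hy _ hmem
          have h2 : (inner ℝ (toE (G.psiMat.transpose.mulVec z')) (toE (toE.symm y)) : ℝ) = 0 := by
            rw [LinearEquiv.apply_symm_apply]; exact hthis
          rw [hinner] at h2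
          rw [Matrix.dotProduct_mulVec, ← Matrix.mulVec_transpose]
          exact h2
        have := hall (G.psiMat.mulVec (toE.symm y))
        have hdot : dotProduct (G.psiMat.mulVec (toE.symm y))
            (G.psiMat.mulVec (toE.symm y)) = 0 := this
        have := dotProduct_self_eq_zero.1 hdot
        rw [Matrix.mulVecLin_apply]
        exact this
      · intro hy u hu
        rw [hW] at hu
        rw [Submodule.mem_map] at hu hy
        obtain ⟨w', hw', rfl⟩ := hu
        obtain ⟨y', hy', rfl⟩ := hy
        obtain ⟨z', rfl⟩ := hw'
        have hker : G.psiMat.mulVec y' = 0 := by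
          have := LinearMap.mem_ker.1 hy'
          rw [← Matrix.mulVecLin_apply]; exact this
        show (inner ℝ (toE (G.psiMat.transpose.mulVecLin z')) (toE y') : ℝ) = 0
        rw [hinner]
        have : ∑ j, (G.psiMat.transpose.mulVec z') j * y' j
            = dotProduct (G.psiMat.transpose.mulVec z') y' := rfl
        rw [show G.psiMat.transpose.mulVecLin z' = G.psiMat.transpose.mulVec z' from rfl]
        rw [this, Matrix.mulVec_transpose, ← Matrix.dotProduct_mulVec, hker]
        simp [dotProduct]
    have hv₀mem : toE v₀ ∈ Wᗮᗮ := by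
      rw [Submodule.mem_orthogonal]
      intro y hy
      rw [hWperp, Submodule.mem_map] at hy
      obtain ⟨u, hu, rfl⟩ := hy
      show (inner ℝ (toE u) (toE v₀) : ℝ) = 0
      rw [hinner]
      exact h u hu
    rw [Submodule.orthogonal_orthogonal] at hv₀mem
    rw [hW, Submodule.mem_map] at hv₀mem
    obtain ⟨w', hw', heq⟩ := hv₀mem
    obtain ⟨z', rfl⟩ := hw'
    exact ⟨z', toE.injective heq⟩
  -- construct the steady state
  set x : Fin n → ℝ := fun i => Real.exp (z (Sum.inl i)) with hx
  have hxpos : Pos x := fun i => Real.exp_pos _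
  set C : Fin G.m → ℝ :=
    fun j => ∑ i₀, (if G.Conn i₀ j then (1:ℝ) else 0) * z (Sum.inr i₀) with hC
  have hCconst : ∀ j k, G.Conn j k → C j = C k := by
    intro j k hjk
    refine Finset.sum_congr rfl fun i₀ _ => ?_
    have : G.Conn i₀ j ↔ G.Conn i₀ k :=
      ⟨fun h' => G.conn_trans h' hjk, fun h' => G.conn_trans h' (G.conn_symm hjk)⟩
    simp only [this]
  have hzj : ∀ j, ∑ i, (G.Y j i : ℝ) * z (Sum.inl i) + C j = v₀ j := by
    intro j
    have := congrFun hz j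
    rw [Matrix.mulVec_transpose] at this
    have h2 : Matrix.vecMul z G.psiMat j = ∑ r, z r * G.psiMat r j := rfl
    rw [h2, Fintype.sum_sum_type] at this
    rw [← this, hC]
    congr 1
    · exact Finset.sum_congr rfl fun i _ => by rw [psiMat]; ring
    · exact Finset.sum_congr rfl fun i₀ _ => by rw [psiMat]; ring
  have hmono : ∀ j, monomial x (G.Y j) = G.K κ j * Real.exp (- C j) := by
    intro j
    have h1 : monomial x (G.Y j) = Real.exp (∑ i, (G.Y j i : ℝ) * z (Sum.inl i)) := by
      rw [monomial, Real.exp_sum]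
      refine Finset.prod_congr rfl fun i _ => ?_
      rw [hx]
      exact (Real.exp_nat_mul _ _).symm
    rw [h1, show (∑ i, (G.Y j i : ℝ) * z (Sum.inl i)) = v₀ j - C j from by
      have := hzj j; linarith, Real.exp_sub, hv₀]
    rw [Real.exp_log (hKpos j)]
    rw [Real.exp_neg]
    rfl
  refine ⟨x, hxpos, ?_⟩
  intro i
  have hKbal := NBal_K (G := G) κ i
  calc ∑ e ∈ Finset.univ.filter (fun e => G.tgt e = i), κ e * monomial x (G.Y (G.src e))
      = ∑ e ∈ Finset.univ.filter (fun e => G.tgt e = i),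
          κ e * G.K κ (G.src e) * Real.exp (- C i) := by
        refine Finset.sum_congr rfl fun e he => ?_
        have htgt : G.tgt e = i := (Finset.mem_filter.1 he).2
        have hconn : G.Conn (G.src e) i := htgt ▸ G.conn_of_edge e
        rw [hmono, hCconst _ _ hconn]
        ring
    _ = (∑ e ∈ Finset.univ.filter (fun e => G.tgt e = i), κ e * G.K κ (G.src e))
          * Real.exp (- C i) := by rw [Finset.sum_mul]
    _ = (∑ e ∈ Finset.univ.filter (fun e => G.src e = i), κ e * G.K κ i)
          * Real.exp (- C i) := by rw [hKbal]
    _ = ∑ e ∈ Finset.univ.filter (fun e => G.src e = i), κ e * monomial x (G.Y i) := by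
        rw [Finset.sum_mul]
        refine Finset.sum_congr rfl fun e he => ?_
        rw [hmono i]
        ring

end ReactionGraph
open ReactionGraph in
/-- existence criterion. For a weakly reversible `G` with mass-action rate
constants `κ`, and `u_1, …, u_{δ_G}` a basis of `ker Ψ_G`, a positive node balanced steady
state w.r.t. `G` exists iff `∏_j K_{G,j}^{u_{ij}} = 1` for all `i`. -/
theorem exists_pos_node_balanced_iff {n p : ℕ} (G : ReactionGraph n p)
    (hwr : G.WeaklyReversible) (κ : Fin p → ℝ) (hκ : ∀ e, 0 < κ e)
    (d : ℕ) (hd : (d : ℤ) = G.deficiency) (b : Module.Basis (Fin d) ℝ G.kerPsi) :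
    (∃ x : Fin n → ℝ, Pos x ∧ G.inc.mulVec (G.massAction κ x) = 0) ↔
      ∀ i : Fin d, ∏ j : Fin G.m, Real.rpow (G.K κ j) ((b i : Fin G.m → ℝ) j) = 1 := by
  classical
  have hKpos : ∀ j, 0 < G.K κ j := K_pos hwr hκ
  have hconv : ∀ u : Fin G.m → ℝ,
      (∏ j, Real.rpow (G.K κ j) (u j) = 1) ↔ (∑ j, u j * Real.log (G.K κ j) = 0) := by
    intro u
    have h1 : ∀ j, Real.rpow (G.K κ j) (u j) = Real.exp (Real.log (G.K κ j) * u j) :=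
      fun j => Real.rpow_def_of_pos (hKpos j) _
    rw [Finset.prod_congr rfl (fun j _ => h1 j), ← Real.exp_sum, Real.exp_eq_one_iff]
    constructor
    · intro h0
      rw [← h0]
      exact Finset.sum_congr rfl fun j _ => by ring
    · intro h0
      rw [← h0]
      exact Finset.sum_congr rfl fun j _ => by ring
  have hsteady : ∀ x : Fin n → ℝ,
      G.inc.mulVec (G.massAction κ x) = 0 ↔ G.NBal κ (fun j => monomial x (G.Y j)) := by
    intro x
    have hma : G.massAction κ x
        = fun e => κ e * (fun j => monomial x (G.Y j)) (G.src e) := rfl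
    rw [hma]
    exact steady_iff_NBal κ (fun j => monomial x (G.Y j))
  constructor
  · rintro ⟨x, hx, hs⟩ i
    rw [hconv]
    exact forward_key hwr hκ hx ((hsteady x).1 hs) (b i).2
  · intro hb
    have hker : ∀ u ∈ G.kerPsi, ∑ j, u j * Real.log (G.K κ j) = 0 := by
      intro u hu
      have hbasis : ∀ i,
          ((dotL (fun j => Real.log (G.K κ j))).comp G.kerPsi.subtype) (b i) = 0 := by
        intro i
        have := (hconv ((b i : Fin G.m → ℝ))).1 (hb i)
        exact this
      have hzero : (dotL (fun j => Real.log (G.K κ j))).comp G.kerPsi.subtype = 0 :=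
        Module.Basis.ext b fun i => by rw [hbasis i]; simp
      have := congrArg (fun ψ => ψ ⟨u, hu⟩) hzero
      exact this
    obtain ⟨x, hx, hnb⟩ := backward_key hwr hκ hker
    exact ⟨x, hx, (hsteady x).2 hnb⟩
end

section
/- If the mass-action system (N, G, κ) admits one positive node balanced steady state with respect to a weakly reversible reaction graph G, then every positive steady state of N is node balanced with respect to G, and there is exactly one positive steady state in each stoichiometric compatibility class, which is locally asymptotically stable relative to its class. -/
open scoped Classical

open ReactionGraph in
/-- auxiliary dot product between a real vector and a complex label -/
noncomputable def RG14.mdot {n : ℕ} (μ : Fin n → ℝ) (y : Fin n → ℕ) : ℝ := ∑ i, μ i * (y i : ℝ)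

namespace RG14
open ReactionGraph

variable {n p : ℕ}

lemma regroup {m : ℕ} (c : Fin p → Fin m) (w : Fin p → ℝ) (F : Fin m → ℝ) :
    ∑ e, w e * F (c e) = ∑ i, F i * ∑ e ∈ Finset.univ.filter (fun e => c e = i), w e := by
  have : ∀ i : Fin m, F i * ∑ e ∈ Finset.univ.filter (fun e => c e = i), w e
      = ∑ e, if c e = i then w e * F i else 0 := by
    intro i
    rw [Finset.mul_sum, Finset.sum_filter]
    exact Finset.sum_congr rfl fun e _ => by split <;> ring
  simp_rw [this]
  rw [Finset.sum_comm]
  congr 1; funext e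
  simp

lemma monomial_exp (x : Fin n → ℝ) (hx : Pos x) (y : Fin n → ℕ) :
    monomial x y = Real.exp (∑ i, (y i : ℝ) * Real.log (x i)) := by
  rw [Real.exp_sum, monomial]
  refine Finset.prod_congr rfl fun i _ => ?_
  rw [mul_comm, Real.exp_mul, Real.exp_log (hx i), Real.rpow_natCast]

lemma monomial_pos (x : Fin n → ℝ) (hx : Pos x) (y : Fin n → ℕ) : 0 < monomial x y :=
  Finset.prod_pos fun i _ => pow_pos (hx i) _

lemma massAction_pos (G : ReactionGraph n p) (κ : Fin p → ℝ) (hκ : ∀ e, 0 < κ e)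
    (x : Fin n → ℝ) (hx : Pos x) (e : Fin p) : 0 < G.massAction κ x e :=
  mul_pos (hκ e) (monomial_pos x hx _)

/-- the log-ratio vector -/
noncomputable def lr (x xs : Fin n → ℝ) : Fin n → ℝ := fun i => Real.log (x i) - Real.log (xs i)

lemma massAction_scale (G : ReactionGraph n p) (κ : Fin p → ℝ) (x xs : Fin n → ℝ)
    (hx : Pos x) (hxs : Pos xs) (e : Fin p) :
    G.massAction κ x e = G.massAction κ xs e
      * Real.exp (mdot (lr x xs) (G.Y (G.src e))) := by
  rw [massAction, massAction, monomial_exp x hx, monomial_exp xs hxs, mul_assoc,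
    ← Real.exp_add, mdot, ← Finset.sum_add_distrib]
  show _ = κ e * Real.exp (∑ i, ((G.Y (G.src e) i : ℝ) * Real.log (xs i) + (Real.log (x i) - Real.log (xs i)) * (G.Y (G.src e) i : ℝ)))
  congr 2
  refine Finset.sum_congr rfl fun i _ => by ring

lemma nodeBalanced_iff (G : ReactionGraph n p) (w : Fin p → ℝ) :
    G.inc.mulVec w = 0 ↔ ∀ i, (∑ e ∈ Finset.univ.filter (fun e => G.tgt e = i), w e)
      = ∑ e ∈ Finset.univ.filter (fun e => G.src e = i), w e := by
  rw [funext_iff]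
  refine forall_congr' fun i => ?_
  rw [Matrix.mulVec, Pi.zero_apply, dotProduct]
  simp only [inc, sub_mul, ite_mul, one_mul, zero_mul]
  rw [Finset.sum_sub_distrib, sub_eq_zero, ← Finset.sum_filter, ← Finset.sum_filter]

end RG14
namespace RG14
open ReactionGraph

variable {n p : ℕ}

lemma flux_swap (G : ReactionGraph n p) (w : Fin p → ℝ) (hw : G.inc.mulVec w = 0)
    (F : Fin G.m → ℝ) :
    ∑ e, w e * F (G.tgt e) = ∑ e, w e * F (G.src e) := by
  rw [regroup G.tgt w F, regroup G.src w F]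
  exact Finset.sum_congr rfl fun i _ => by rw [(nodeBalanced_iff G w).1 hw i]

lemma stoich_col (G : ReactionGraph n p) (μ : Fin n → ℝ) (e : Fin p) :
    ∑ i, μ i * G.stoich i e = mdot μ (G.Y (G.tgt e)) - mdot μ (G.Y (G.src e)) := by
  rw [mdot, mdot, ← Finset.sum_sub_distrib]
  exact Finset.sum_congr rfl fun i _ => by rw [stoich]; ring

lemma dot_stoich (G : ReactionGraph n p) (μ : Fin n → ℝ) (w : Fin p → ℝ) :
    ∑ i, μ i * G.stoich.mulVec w i
      = ∑ e, w e * (mdot μ (G.Y (G.tgt e)) - mdot μ (G.Y (G.src e))) := by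
  have : ∀ i, μ i * G.stoich.mulVec w i = ∑ e, w e * (μ i * G.stoich i e) := by
    intro i
    rw [Matrix.mulVec, dotProduct, Finset.mul_sum]
    exact Finset.sum_congr rfl fun e _ => by ring
  simp_rw [this]
  rw [Finset.sum_comm]
  refine Finset.sum_congr rfl fun e _ => ?_
  rw [← Finset.mul_sum, stoich_col]

lemma stoich_mulVec_eq_zero (G : ReactionGraph n p) (w : Fin p → ℝ)
    (hw : G.inc.mulVec w = 0) : G.stoich.mulVec w = 0 := by
  funext i
  rw [Matrix.mulVec, Pi.zero_apply, dotProduct]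
  have h1 : ∑ e, G.stoich i e * w e
      = (∑ e, w e * ((G.Y (G.tgt e) i : ℝ))) - ∑ e, w e * ((G.Y (G.src e) i : ℝ)) := by
    rw [← Finset.sum_sub_distrib]
    exact Finset.sum_congr rfl fun e _ => by rw [stoich]; ring
  rw [h1, flux_swap G w hw (fun k => (G.Y k i : ℝ)), sub_self]

lemma exp_ineq (a b : ℝ) : Real.exp a * (b - a) ≤ Real.exp b - Real.exp a := by
  have h := Real.add_one_le_exp (b - a)
  have h2 : Real.exp a * Real.exp (b - a) = Real.exp b := by
    rw [← Real.exp_add]; ring_nf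
  nlinarith [Real.exp_pos a]

lemma exp_ineq_strict {a b : ℝ} (hab : a ≠ b) :
    Real.exp a * (b - a) < Real.exp b - Real.exp a := by
  have h := Real.add_one_lt_exp (x := b - a) (by intro h; apply hab; linarith)
  have h2 : Real.exp a * Real.exp (b - a) = Real.exp b := by
    rw [← Real.exp_add]; ring_nf
  nlinarith [Real.exp_pos a]

section Master

variable (G : ReactionGraph n p) (κ : Fin p → ℝ) (x xs : Fin n → ℝ)

lemma flux_exp_swap (hnb : G.inc.mulVec (G.massAction κ xs) = 0) :
    ∑ e, G.massAction κ xs e * Real.exp (mdot (lr x xs) (G.Y (G.tgt e)))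
      = ∑ e, G.massAction κ xs e * Real.exp (mdot (lr x xs) (G.Y (G.src e))) :=
  flux_swap G _ hnb (fun k => Real.exp (mdot (lr x xs) (G.Y k)))

lemma key_le (hκ : ∀ e, 0 < κ e) (hx : Pos x) (hxs : Pos xs)
    (hnb : G.inc.mulVec (G.massAction κ xs) = 0) :
    ∑ i, lr x xs i * G.stoich.mulVec (G.massAction κ x) i ≤ 0 := by
  rw [dot_stoich]
  have h0 := flux_exp_swap G κ x xs hnb
  have hle : ∀ e : Fin p, G.massAction κ x e
        * (mdot (lr x xs) (G.Y (G.tgt e)) - mdot (lr x xs) (G.Y (G.src e)))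
      ≤ G.massAction κ xs e * (Real.exp (mdot (lr x xs) (G.Y (G.tgt e)))
        - Real.exp (mdot (lr x xs) (G.Y (G.src e)))) := by
    intro e
    rw [massAction_scale G κ x xs hx hxs e, mul_assoc]
    exact mul_le_mul_of_nonneg_left (exp_ineq _ _) (massAction_pos G κ hκ xs hxs e).le
  calc ∑ e, G.massAction κ x e
        * (mdot (lr x xs) (G.Y (G.tgt e)) - mdot (lr x xs) (G.Y (G.src e)))
      ≤ ∑ e, G.massAction κ xs e * (Real.exp (mdot (lr x xs) (G.Y (G.tgt e)))
        - Real.exp (mdot (lr x xs) (G.Y (G.src e)))) := Finset.sum_le_sum fun e _ => hle e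
    _ = 0 := by
        simp_rw [mul_sub]
        rw [Finset.sum_sub_distrib, h0, sub_self]

lemma key_eq (hκ : ∀ e, 0 < κ e) (hx : Pos x) (hxs : Pos xs)
    (hnb : G.inc.mulVec (G.massAction κ xs) = 0)
    (hzero : ∑ i, lr x xs i * G.stoich.mulVec (G.massAction κ x) i = 0) :
    ∀ e, mdot (lr x xs) (G.Y (G.tgt e)) = mdot (lr x xs) (G.Y (G.src e)) := by
  intro e0
  by_contra hne
  have h0 := flux_exp_swap G κ x xs hnb
  set μ := lr x xs with hμ
  have hg : ∀ e : Fin p, (0:ℝ) ≤ G.massAction κ xs e * (Real.exp (mdot μ (G.Y (G.tgt e)))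
      - Real.exp (mdot μ (G.Y (G.src e))))
      - G.massAction κ x e * (mdot μ (G.Y (G.tgt e)) - mdot μ (G.Y (G.src e))) := by
    intro e
    rw [massAction_scale G κ x xs hx hxs e, mul_assoc, ← mul_sub]
    exact mul_nonneg (massAction_pos G κ hκ xs hxs e).le (by linarith [exp_ineq (mdot μ (G.Y (G.src e))) (mdot μ (G.Y (G.tgt e)))])
  rw [dot_stoich] at hzero
  have hsum : ∑ e, (G.massAction κ xs e * (Real.exp (mdot μ (G.Y (G.tgt e)))
      - Real.exp (mdot μ (G.Y (G.src e))))
      - G.massAction κ x e * (mdot μ (G.Y (G.tgt e)) - mdot μ (G.Y (G.src e)))) = 0 := by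
    rw [Finset.sum_sub_distrib, hzero, sub_zero]
    simp_rw [mul_sub]
    rw [Finset.sum_sub_distrib, h0, sub_self]
  have := (Finset.sum_eq_zero_iff_of_nonneg (fun e _ => hg e)).1 hsum e0 (Finset.mem_univ e0)
  have hstrict : G.massAction κ x e0 * (mdot μ (G.Y (G.tgt e0)) - mdot μ (G.Y (G.src e0)))
      < G.massAction κ xs e0 * (Real.exp (mdot μ (G.Y (G.tgt e0)))
      - Real.exp (mdot μ (G.Y (G.src e0)))) := by
    rw [massAction_scale G κ x xs hx hxs e0, mul_assoc]
    exact mul_lt_mul_of_pos_left (exp_ineq_strict (fun h => hne (by rw [h])))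
      (massAction_pos G κ hκ xs hxs e0)
  linarith

lemma nb_of_orth (hκ : ∀ e, 0 < κ e) (hx : Pos x) (hxs : Pos xs)
    (hnb : G.inc.mulVec (G.massAction κ xs) = 0)
    (h : ∀ e, mdot (lr x xs) (G.Y (G.tgt e)) = mdot (lr x xs) (G.Y (G.src e))) :
    G.inc.mulVec (G.massAction κ x) = 0 := by
  rw [nodeBalanced_iff]
  intro i
  set μ := lr x xs with hμ
  have htgt : ∑ e ∈ Finset.univ.filter (fun e => G.tgt e = i), G.massAction κ x e
      = (∑ e ∈ Finset.univ.filter (fun e => G.tgt e = i), G.massAction κ xs e)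
        * Real.exp (mdot μ (G.Y i)) := by
    rw [Finset.sum_mul]
    refine Finset.sum_congr rfl fun e he => ?_
    have hte : G.tgt e = i := (Finset.mem_filter.1 he).2
    rw [massAction_scale G κ x xs hx hxs e, ← h e, hte]
  have hsrc : ∑ e ∈ Finset.univ.filter (fun e => G.src e = i), G.massAction κ x e
      = (∑ e ∈ Finset.univ.filter (fun e => G.src e = i), G.massAction κ xs e)
        * Real.exp (mdot μ (G.Y i)) := by
    rw [Finset.sum_mul]
    refine Finset.sum_congr rfl fun e he => ?_
    have hte : G.src e = i := (Finset.mem_filter.1 he).2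
    rw [massAction_scale G κ x xs hx hxs e, hte]
  rw [htgt, hsrc, (nodeBalanced_iff G _).1 hnb i]

/-- Part (a): every positive steady state is node balanced. -/
lemma parta (hκ : ∀ e, 0 < κ e) (hx : Pos x) (hxs : Pos xs)
    (hnb : G.inc.mulVec (G.massAction κ xs) = 0)
    (hsteady : G.stoich.mulVec (G.massAction κ x) = 0) :
    G.inc.mulVec (G.massAction κ x) = 0 := by
  refine nb_of_orth G κ x xs hκ hx hxs hnb (key_eq G κ x xs hκ hx hxs hnb ?_)
  rw [hsteady]
  simp

/-- characterization of node balanced states -/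
lemma nb_iff_orth (hκ : ∀ e, 0 < κ e) (hx : Pos x) (hxs : Pos xs)
    (hnb : G.inc.mulVec (G.massAction κ xs) = 0) :
    G.inc.mulVec (G.massAction κ x) = 0
      ↔ ∀ e, mdot (lr x xs) (G.Y (G.tgt e)) = mdot (lr x xs) (G.Y (G.src e)) := by
  constructor
  · intro hxnb
    exact key_eq G κ x xs hκ hx hxs hnb (by rw [stoich_mulVec_eq_zero G _ hxnb]; simp)
  · exact nb_of_orth G κ x xs hκ hx hxs hnb

end Master

end RG14
namespace RG14
open ReactionGraph

variable {n p : ℕ}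

lemma log_mono_term {a b : ℝ} (ha : 0 < a) (hb : 0 < b) :
    0 ≤ (Real.log a - Real.log b) * (a - b)
    ∧ ((Real.log a - Real.log b) * (a - b) = 0 → a = b) := by
  rcases lt_trichotomy a b with h | h | h
  · have hl := Real.log_lt_log ha h
    constructor
    · nlinarith
    · intro h0; nlinarith
  · simp [h]
  · have hl := Real.log_lt_log hb h
    constructor
    · nlinarith
    · intro h0; nlinarith

/-- Uniqueness of positive node-balanced states within a compatibility class. -/
lemma uniq (G : ReactionGraph n p) (κ : Fin p → ℝ) (hκ : ∀ e, 0 < κ e)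
    (xs : Fin n → ℝ) (hxs : Pos xs) (hnb : G.inc.mulVec (G.massAction κ xs) = 0)
    (x y : Fin n → ℝ) (hx : Pos x) (hy : Pos y)
    (hxnb : G.inc.mulVec (G.massAction κ x) = 0)
    (hynb : G.inc.mulVec (G.massAction κ y) = 0)
    (hcl : x - y ∈ LinearMap.range G.stoich.mulVecLin) : x = y := by
  obtain ⟨c, hc⟩ := hcl
  have hox := (nb_iff_orth G κ x xs hκ hx hxs hnb).1 hxnb
  have hoy := (nb_iff_orth G κ y xs hκ hy hxs hnb).1 hynb
  -- μ := log x - log y is orthogonal to all stoichiometric columns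
  have horth : ∀ e, mdot (lr x y) (G.Y (G.tgt e)) = mdot (lr x y) (G.Y (G.src e)) := by
    intro e
    have h1 : ∀ z : Fin n → ℝ, ∀ k, mdot (lr x y) (G.Y k)
        = mdot (lr x xs) (G.Y k) - mdot (lr y xs) (G.Y k) := by
      intro z k
      rw [mdot, mdot, mdot, ← Finset.sum_sub_distrib]
      exact Finset.sum_congr rfl fun i _ => by rw [lr, lr, lr]; ring
    rw [h1 x, h1 x, hox e, hoy e]
  -- dot of μ with x - y is zero
  have hdot : ∑ i, lr x y i * (x i - y i) = 0 := by
    have hxy : ∀ i, x i - y i = G.stoich.mulVec c i := by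
      intro i
      have := congrFun hc i
      simpa [Matrix.mulVecLin] using this.symm
    calc ∑ i, lr x y i * (x i - y i) = ∑ i, lr x y i * G.stoich.mulVec c i := by
          exact Finset.sum_congr rfl fun i _ => by rw [hxy i]
      _ = ∑ e, c e * (mdot (lr x y) (G.Y (G.tgt e)) - mdot (lr x y) (G.Y (G.src e))) :=
          dot_stoich G _ c
      _ = 0 := Finset.sum_eq_zero fun e _ => by rw [horth e, sub_self, mul_zero]
  have hterm : ∀ i, lr x y i * (x i - y i) = 0 := fun i =>
    (Finset.sum_eq_zero_iff_of_nonneg (fun i _ => (log_mono_term (hx i) (hy i)).1)).1 hdot i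
      (Finset.mem_univ i)
  funext i
  exact (log_mono_term (hx i) (hy i)).2 (hterm i)

end RG14
namespace RG14
open ReactionGraph

/-- relative entropy integrand -/
noncomputable def psi (c u : ℝ) : ℝ := u * Real.log u - u * Real.log c - u + c

/-- the Lyapunov / Birch objective function -/
noncomputable def phi {n : ℕ} (c x : Fin n → ℝ) : ℝ := ∑ i, psi (c i) (x i)

lemma psi_zero (c : ℝ) : psi c 0 = c := by simp [psi]

lemma psi_continuous (c : ℝ) : Continuous (psi c) := by
  unfold psi
  exact ((Real.continuous_mul_log.sub (continuous_id.mul continuous_const)).sub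
    continuous_id).add continuous_const

lemma phi_continuous {n : ℕ} (c : Fin n → ℝ) : Continuous (phi c) :=
  continuous_finset_sum _ fun i _ => (psi_continuous (c i)).comp (continuous_apply i)

lemma psi_nonneg {c u : ℝ} (hc : 0 < c) (hu : 0 ≤ u) : 0 ≤ psi c u := by
  rcases eq_or_lt_of_le hu with h | h
  · rw [← h, psi_zero]; exact hc.le
  · have hlog := Real.log_le_sub_one_of_pos (div_pos hc h)
    rw [Real.log_div hc.ne' h.ne'] at hlog
    have : u * (Real.log c - Real.log u) ≤ u * (c / u - 1) :=
      mul_le_mul_of_nonneg_left hlog h.le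
    have hcu : u * (c / u - 1) = c - u := by field_simp
    unfold psi; nlinarith

lemma psi_pos {c u : ℝ} (hc : 0 < c) (hu : 0 ≤ u) (hne : u ≠ c) : 0 < psi c u := by
  rcases eq_or_lt_of_le hu with h | h
  · rw [← h, psi_zero]; exact hc
  · have hne1 : c / u ≠ 1 := by
      intro h1; exact hne (by field_simp at h1; linarith)
    have hlog := Real.log_lt_sub_one_of_pos (div_pos hc h) hne1
    rw [Real.log_div hc.ne' h.ne'] at hlog
    have : u * (Real.log c - Real.log u) < u * (c / u - 1) :=
      mul_lt_mul_of_pos_left hlog h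
    have hcu : u * (c / u - 1) = c - u := by field_simp
    unfold psi; nlinarith

lemma psi_hasDerivAt {c u : ℝ} (hu : 0 < u) :
    HasDerivAt (psi c) (Real.log u - Real.log c) u := by
  have h1 := Real.hasDerivAt_mul_log hu.ne'
  have h2 : HasDerivAt (fun v : ℝ => v * Real.log c) (Real.log c) u :=
    hasDerivAt_mul_const _
  have := (((h1.sub h2).sub (hasDerivAt_id u)).add_const c)
  refine (this.congr_deriv (by ring)).congr_of_eventuallyEq (Filter.Eventually.of_forall fun x => ?_)
  simp [psi]

lemma psi_coercive {c : ℝ} (hc : 0 < c) (B : ℝ) (hB : 0 ≤ B) :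
    ∃ R : ℝ, 0 < R ∧ ∀ u : ℝ, 0 ≤ u → psi c u ≤ B → u ≤ R := by
  refine ⟨max 1 (Real.exp (Real.log c + 1 + B)), lt_max_of_lt_left one_pos, ?_⟩
  intro u hu hpsi
  by_contra hgt
  push_neg at hgt
  have h1 : (1:ℝ) < u := lt_of_le_of_lt (le_max_left _ _) hgt
  have h2 : Real.exp (Real.log c + 1 + B) < u := lt_of_le_of_lt (le_max_right _ _) hgt
  have h3 : Real.log c + 1 + B < Real.log u := by
    have := Real.log_lt_log (Real.exp_pos _) h2
    rwa [Real.log_exp] at this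
  have h4 : psi c u = u * (Real.log u - Real.log c - 1) + c := by unfold psi; ring
  nlinarith [h4]

end RG14
namespace RG14
open ReactionGraph

variable {n p : ℕ}

lemma exists_nb (G : ReactionGraph n p) (κ : Fin p → ℝ) (hκ : ∀ e, 0 < κ e)
    (c : Fin n → ℝ) (hc : Pos c) (hnb : G.inc.mulVec (G.massAction κ c) = 0)
    (x₀ : Fin n → ℝ) (hx₀ : Pos x₀) :
    ∃ z : Fin n → ℝ, Pos z ∧ (z - x₀) ∈ LinearMap.range G.stoich.mulVecLin ∧
      G.inc.mulVec (G.massAction κ z) = 0 := by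
  classical
  set S := LinearMap.range G.stoich.mulVecLin with hS
  have hScl : IsClosed (S : Set (Fin n → ℝ)) := Submodule.closed_of_finiteDimensional S
  set K : Set (Fin n → ℝ) := {x | (∀ i, 0 ≤ x i) ∧ x - x₀ ∈ S} with hK
  have hKcl : IsClosed K := by
    have h1 : IsClosed {x : Fin n → ℝ | ∀ i, 0 ≤ x i} := by
      have he : {x : Fin n → ℝ | ∀ i, 0 ≤ x i} = ⋂ i, {x | 0 ≤ x i} := by ext; simp
      rw [he]
      exact isClosed_iInter fun i => isClosed_le continuous_const (continuous_apply i)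
    have h2 : IsClosed {x : Fin n → ℝ | x - x₀ ∈ S} :=
      hScl.preimage (continuous_id.sub continuous_const)
    exact h1.inter h2
  set B := phi c x₀ with hB
  have hB0 : 0 ≤ B := Finset.sum_nonneg fun i _ => psi_nonneg (hc i) (hx₀ i).le
  choose Rf hRf using fun i => psi_coercive (hc i) B hB0
  set K' := K ∩ {x | phi c x ≤ B} with hK'
  have hK'cl : IsClosed K' := hKcl.inter (isClosed_le (phi_continuous c) continuous_const)
  have hsub : K' ⊆ Set.univ.pi (fun i => Set.Icc 0 (Rf i)) := by
    rintro x ⟨⟨hx1, _⟩, hx2⟩ i _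
    refine ⟨hx1 i, (hRf i).2 (x i) (hx1 i) ?_⟩
    have hle := Finset.single_le_sum (f := fun j => psi (c j) (x j))
      (fun j _ => psi_nonneg (hc j) (hx1 j)) (Finset.mem_univ i)
    exact le_trans hle hx2
  have hcomp : IsCompact K' :=
    IsCompact.of_isClosed_subset (isCompact_univ_pi fun i => isCompact_Icc) hK'cl hsub
  have hx₀K : x₀ ∈ K := ⟨fun i => (hx₀ i).le, by simp [sub_self, Submodule.zero_mem]⟩
  have hx₀K' : x₀ ∈ K' := ⟨hx₀K, by simp [hB]⟩
  obtain ⟨z, hzK', hzmin'⟩ := hcomp.exists_isMinOn ⟨x₀, hx₀K'⟩ (phi_continuous c).continuousOn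
  have hzK : z ∈ K := hzK'.1
  have hzmin : ∀ x ∈ K, phi c z ≤ phi c x := by
    intro x hxK
    by_cases hxB : phi c x ≤ B
    · exact hzmin' ⟨hxK, hxB⟩
    · push_neg at hxB
      exact le_trans (hzmin' hx₀K') hxB.le
  -- z is positive
  have hzpos : Pos z := by
    by_contra hnp
    simp only [Pos, not_forall, not_lt] at hnp
    obtain ⟨j, hj0⟩ := hnp
    have hj : z j = 0 := le_antisymm hj0 (hzK.1 j)
    set d : Fin n → ℝ := fun i => x₀ i - z i with hd
    -- segment in K
    have hseg : ∀ θ : ℝ, θ ∈ Set.Ioc (0:ℝ) 1 → (fun i => z i + θ * d i) ∈ K := by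
      rintro θ ⟨hθ0, hθ1⟩
      constructor
      · intro i
        have := hzK.1 i
        have := hx₀ i
        simp only [hd]
        nlinarith
      · have heq : (fun i => z i + θ * d i) - x₀ = (1 - θ) • (z - x₀) := by
          funext i
          simp only [Pi.sub_apply, Pi.smul_apply, smul_eq_mul, hd]
          ring
        rw [heq]
        exact Submodule.smul_mem S _ hzK.2
    -- split coordinates
    set Zf := Finset.univ.filter (fun i => z i = 0) with hZf
    set Pf := Finset.univ.filter (fun i => ¬ z i = 0) with hPf
    have hjZ : j ∈ Zf := Finset.mem_filter.2 ⟨Finset.mem_univ j, hj⟩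
    have hdZ : ∀ i ∈ Zf, 0 < d i := by
      intro i hi
      have : z i = 0 := (Finset.mem_filter.1 hi).2
      simp only [hd, this, sub_zero]
      exact hx₀ i
    set A := ∑ i ∈ Zf, d i with hA
    have hApos : 0 < A := Finset.sum_pos' (fun i hi => (hdZ i hi).le) ⟨j, hjZ, hdZ j hjZ⟩
    set C : ℝ := ∑ i ∈ Zf, d i * (Real.log (d i) - Real.log (c i) - 1) with hC
    set L : ℝ := ∑ i ∈ Pf, (Real.log (z i) - Real.log (c i)) * d i with hL
    set h : ℝ → ℝ := fun θ => (phi c (fun i => z i + θ * d i) - phi c z) / θ with hh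
    -- h1 tendsto L
    have hh1 : Filter.Tendsto
        (fun θ => ∑ i ∈ Pf, (psi (c i) (z i + θ * d i) - psi (c i) (z i)) / θ)
        (nhdsWithin 0 (Set.Ioi 0)) (nhds L) := by
      rw [hL]
      refine tendsto_finset_sum _ fun i hi => ?_
      have hzi : 0 < z i := lt_of_le_of_ne (hzK.1 i) (Ne.symm ((Finset.mem_filter.1 hi).2))
      have hinner : HasDerivAt (fun θ : ℝ => z i + θ * d i) (d i) 0 :=
        (hasDerivAt_mul_const (d i)).const_add (z i)
      have houter : HasDerivAt (psi (c i)) (Real.log (z i) - Real.log (c i)) (z i + 0 * d i) := by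
        simpa using psi_hasDerivAt (c := c i) hzi
      have hcomp2 : HasDerivAt (fun θ : ℝ => psi (c i) (z i + θ * d i))
          ((Real.log (z i) - Real.log (c i)) * d i) 0 := by exact houter.comp 0 hinner
      have := hasDerivAt_iff_tendsto_slope.1 hcomp2
      have hmono : nhdsWithin (0:ℝ) (Set.Ioi 0) ≤ nhdsWithin 0 {(0:ℝ)}ᶜ :=
        nhdsWithin_mono 0 (fun θ hθ => ne_of_gt hθ)
      have h2 := this.mono_left hmono
      refine h2.congr' ?_
      filter_upwards [self_mem_nhdsWithin] with θ hθ
      rw [slope_def_field, sub_zero]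
      simp
    -- h2 formula
    have hh2 : ∀ θ : ℝ, 0 < θ →
        ∑ i ∈ Zf, (psi (c i) (z i + θ * d i) - psi (c i) (z i)) / θ = A * Real.log θ + C := by
      intro θ hθ
      rw [hA, hC, Finset.sum_mul, ← Finset.sum_add_distrib]
      refine Finset.sum_congr rfl fun i hi => ?_
      have hzi : z i = 0 := (Finset.mem_filter.1 hi).2
      have hdi : 0 < d i := hdZ i hi
      rw [hzi, zero_add, psi_zero, psi]
      rw [Real.log_mul hθ.ne' hdi.ne']
      field_simp
      ring
    -- h tends to -infty
    have hhbot : Filter.Tendsto h (nhdsWithin 0 (Set.Ioi 0)) Filter.atBot := by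
      have hsplit : ∀ θ : ℝ, 0 < θ →
          h θ = (∑ i ∈ Pf, (psi (c i) (z i + θ * d i) - psi (c i) (z i)) / θ)
            + (A * Real.log θ + C) := by
        intro θ hθ
        rw [← hh2 θ hθ]
        simp only [hh, phi]
        rw [← Finset.sum_sub_distrib, ← Finset.sum_div]
        rw [← Finset.sum_filter_add_sum_filter_not Finset.univ (fun i => ¬ z i = 0)]
        rw [add_div, Finset.sum_div, Finset.sum_div]
        congr 1
        refine Finset.sum_congr ?_ fun _ _ => rfl
        simp [hZf]
      have htailA : Filter.Tendsto (fun θ : ℝ => A * Real.log θ + C)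
          (nhdsWithin 0 (Set.Ioi 0)) Filter.atBot := by
        apply Filter.tendsto_atBot_add_const_right
        exact Filter.Tendsto.const_mul_atBot hApos Real.tendsto_log_nhdsGT_zero
      have := Filter.Tendsto.add_atBot hh1 htailA
      refine this.congr' ?_
      filter_upwards [self_mem_nhdsWithin] with θ hθ
      exact (hsplit θ hθ).symm
    -- pick a contradiction point
    have hev : ∀ᶠ θ in nhdsWithin (0:ℝ) (Set.Ioi 0), h θ < 0 ∧ θ ∈ Set.Ioc (0:ℝ) 1 := by
      have h1 := hhbot.eventually_lt_atBot 0
      have h2 : Set.Ioc (0:ℝ) 1 ∈ nhdsWithin (0:ℝ) (Set.Ioi 0) :=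
        Ioc_mem_nhdsGT_of_mem ⟨le_refl 0, one_pos⟩
      filter_upwards [h1, h2] with θ hθ1 hθ2
      exact ⟨hθ1, hθ2⟩
    obtain ⟨θ, hθneg, hθIoc⟩ := hev.exists
    have hmem := hseg θ hθIoc
    have := hzmin _ hmem
    have hθ0 : 0 < θ := hθIoc.1
    have : phi c (fun i => z i + θ * d i) - phi c z < 0 := by
      have := (div_neg_iff.1 (hh ▸ hθneg))
      rcases this with ⟨_, h1⟩ | ⟨h2, _⟩
      · linarith
      · exact h2
    linarith [hzmin _ hmem]
  -- stationarity : gradient orthogonal to stoichiometric columns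
  have hstat : ∀ e, mdot (lr z c) (G.Y (G.tgt e)) = mdot (lr z c) (G.Y (G.src e)) := by
    intro e
    set d : Fin n → ℝ := fun i => G.stoich i e with hd
    have hdS : d ∈ S := by
      refine ⟨Pi.single e 1, ?_⟩
      funext i
      simp [Matrix.mulVecLin, Matrix.mulVec, dotProduct, Pi.single_apply, hd]
    -- small ball positivity
    have hopen : IsOpen {x : Fin n → ℝ | ∀ i, 0 < x i} := by
      have he : {x : Fin n → ℝ | ∀ i, 0 < x i} = ⋂ i, {x | 0 < x i} := by ext; simp
      rw [he]
      exact isOpen_iInter_of_finite fun i => isOpen_lt continuous_const (continuous_apply i)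
    have hcont : Continuous (fun θ : ℝ => fun i => z i + θ * d i) := by
      refine continuous_pi fun i => ?_
      exact continuous_const.add (continuous_id.mul continuous_const)
    have hmem0 : (fun i => z i + (0:ℝ) * d i) ∈ {x : Fin n → ℝ | ∀ i, 0 < x i} := by
      intro i; simpa using hzpos i
    have hnhds : {θ : ℝ | ∀ i, 0 < z i + θ * d i} ∈ nhds (0:ℝ) := by
      have := hopen.preimage hcont
      have hmem : (0:ℝ) ∈ (fun θ : ℝ => fun i => z i + θ * d i) ⁻¹' {x | ∀ i, 0 < x i} := hmem0
      exact this.mem_nhds hmem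
    -- local min of the restricted function
    have hlm : IsLocalMin (fun θ : ℝ => phi c (fun i => z i + θ * d i)) 0 := by
      filter_upwards [hnhds] with θ hθ
      have hmemK : (fun i => z i + θ * d i) ∈ K := by
        constructor
        · exact fun i => (hθ i).le
        · have heq : (fun i => z i + θ * d i) - x₀ = (z - x₀) + θ • d := by
            funext i; simp only [Pi.sub_apply, Pi.add_apply, Pi.smul_apply, smul_eq_mul]; ring
          rw [heq]
          exact Submodule.add_mem S hzK.2 (Submodule.smul_mem S θ hdS)
      have := hzmin _ hmemK
      simpa using this
    have hder : HasDerivAt (fun θ : ℝ => phi c (fun i => z i + θ * d i))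
        (∑ i, (Real.log (z i) - Real.log (c i)) * d i) 0 := by
      have : ∀ i ∈ Finset.univ, HasDerivAt (fun θ : ℝ => psi (c i) (z i + θ * d i))
          ((Real.log (z i) - Real.log (c i)) * d i) 0 := by
        intro i _
        have hinner : HasDerivAt (fun θ : ℝ => z i + θ * d i) (d i) 0 :=
          (hasDerivAt_mul_const (d i)).const_add (z i)
        have houter : HasDerivAt (psi (c i)) (Real.log (z i) - Real.log (c i))
            (z i + 0 * d i) := by simpa using psi_hasDerivAt (c := c i) (hzpos i)
        exact houter.comp 0 hinner
      exact HasDerivAt.fun_sum this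
    have hzero := hlm.hasDerivAt_eq_zero hder
    have hcol := stoich_col G (lr z c) e
    rw [← sub_eq_zero, ← hcol, ← hzero]
    refine Finset.sum_congr rfl fun i _ => ?_
    rw [lr, hd]
  exact ⟨z, hzpos, hzK.2, nb_of_orth G κ z c hκ hzpos hc hnb hstat⟩

end RG14
namespace RG14
open ReactionGraph

variable {n p : ℕ}

lemma psi_self (c : ℝ) : psi c c = 0 := by unfold psi; ring

lemma phi_self (c : Fin n → ℝ) : phi c c = 0 := by
  unfold phi; simp [psi_self]

lemma phi_nonneg {c x : Fin n → ℝ} (hc : Pos c) (hx : ∀ i, 0 ≤ x i) : 0 ≤ phi c x :=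
  Finset.sum_nonneg fun i _ => psi_nonneg (hc i) (hx i)

lemma phi_pos_of_ne {c x : Fin n → ℝ} (hc : Pos c) (hx : ∀ i, 0 ≤ x i) (hne : x ≠ c) :
    0 < phi c x := by
  have : ∃ j, x j ≠ c j := by
    by_contra hco
    push_neg at hco
    exact hne (funext hco)
  obtain ⟨j, hj⟩ := this
  refine Finset.sum_pos' (fun i _ => psi_nonneg (hc i) (hx i)) ⟨j, Finset.mem_univ j, ?_⟩
  exact psi_pos (hc j) (hx j) hj

/-- the Lyapunov derivative function -/
noncomputable def Wfun (G : ReactionGraph n p) (κ : Fin p → ℝ) (xs : Fin n → ℝ)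
    (x : Fin n → ℝ) : ℝ :=
  ∑ i, lr x xs i * G.stoich.mulVec (G.massAction κ x) i

lemma Wfun_nonpos (G : ReactionGraph n p) (κ : Fin p → ℝ) (hκ : ∀ e, 0 < κ e)
    {x xs : Fin n → ℝ} (hx : Pos x) (hxs : Pos xs)
    (hnb : G.inc.mulVec (G.massAction κ xs) = 0) : Wfun G κ xs x ≤ 0 :=
  key_le G κ x xs hκ hx hxs hnb

lemma nb_of_Wfun_zero (G : ReactionGraph n p) (κ : Fin p → ℝ) (hκ : ∀ e, 0 < κ e)
    {x xs : Fin n → ℝ} (hx : Pos x) (hxs : Pos xs)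
    (hnb : G.inc.mulVec (G.massAction κ xs) = 0) (hW : Wfun G κ xs x = 0) :
    G.inc.mulVec (G.massAction κ x) = 0 :=
  nb_of_orth G κ x xs hκ hx hxs hnb (key_eq G κ x xs hκ hx hxs hnb hW)

lemma Wfun_neg (G : ReactionGraph n p) (κ : Fin p → ℝ) (hκ : ∀ e, 0 < κ e)
    {x xs : Fin n → ℝ} (hx : Pos x) (hxs : Pos xs)
    (hnb : G.inc.mulVec (G.massAction κ xs) = 0)
    (hxnb : G.inc.mulVec (G.massAction κ x) ≠ 0) : Wfun G κ xs x < 0 := by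
  rcases lt_or_eq_of_le (Wfun_nonpos G κ hκ hx hxs hnb) with h | h
  · exact h
  · exact absurd (nb_of_Wfun_zero G κ hκ hx hxs hnb h) hxnb

lemma massAction_continuous (G : ReactionGraph n p) (κ : Fin p → ℝ) :
    Continuous (fun x : Fin n → ℝ => G.massAction κ x) := by
  refine continuous_pi fun e => ?_
  refine continuous_const.mul ?_
  exact continuous_finset_prod _ fun i _ => (continuous_apply i).pow _

lemma nv_continuous (G : ReactionGraph n p) (κ : Fin p → ℝ) :
    Continuous (fun x : Fin n → ℝ => G.stoich.mulVec (G.massAction κ x)) := by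
  refine continuous_pi fun i => ?_
  show Continuous fun x : Fin n → ℝ => ∑ e, G.stoich i e * G.massAction κ x e
  refine continuous_finset_sum _ fun e _ => ?_
  exact continuous_const.mul ((continuous_apply e).comp (massAction_continuous G κ))

lemma Wfun_continuousOn (G : ReactionGraph n p) (κ : Fin p → ℝ) (xs : Fin n → ℝ) :
    ContinuousOn (Wfun G κ xs) {x : Fin n → ℝ | Pos x} := by
  unfold Wfun lr
  refine continuousOn_finset_sum _ fun i _ => ContinuousOn.mul ?_ ?_
  · refine ContinuousOn.sub ?_ continuousOn_const
    exact ContinuousOn.log ((continuous_apply i).continuousOn) (fun x hx => (hx i).ne')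
  · exact (((continuous_apply i).comp (nv_continuous G κ)).continuousOn)

/-- derivative of the Lyapunov function along a trajectory -/
lemma Vf_hasDerivAt (G : ReactionGraph n p) (κ : Fin p → ℝ) (xs : Fin n → ℝ)
    (f : ℝ → Fin n → ℝ) (t : ℝ)
    (hf : HasDerivAt f (G.stoich.mulVec (G.massAction κ (f t))) t)
    (hpos : Pos (f t)) :
    HasDerivAt (fun s => phi xs (f s)) (Wfun G κ xs (f t)) t := by
  have hcoord : ∀ i, HasDerivAt (fun s => f s i)
      (G.stoich.mulVec (G.massAction κ (f t)) i) t := (hasDerivAt_pi.1 hf)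
  have hterm : ∀ i ∈ Finset.univ, HasDerivAt (fun s => psi (xs i) (f s i))
      (lr (f t) xs i * G.stoich.mulVec (G.massAction κ (f t)) i) t := by
    intro i _
    have houter : HasDerivAt (psi (xs i)) (Real.log (f t i) - Real.log (xs i)) (f t i) :=
      psi_hasDerivAt (hpos i)
    exact houter.comp t (hcoord i)
  exact HasDerivAt.fun_sum hterm

/-- trajectories stay in the stoichiometric compatibility class -/
lemma class_inv (G : ReactionGraph n p) (κ : Fin p → ℝ) (f : ℝ → Fin n → ℝ)
    (hf : ∀ t : ℝ, 0 ≤ t → HasDerivAt f (G.stoich.mulVec (G.massAction κ (f t))) t)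
    (t : ℝ) (ht : 0 ≤ t) : f t - f 0 ∈ LinearMap.range G.stoich.mulVecLin := by
  classical
  set S := LinearMap.range G.stoich.mulVecLin with hS
  obtain ⟨q, hq⟩ := Submodule.exists_isCompl S
  set π := S.projectionOnto q hq with hπ
  set ρL : (Fin n → ℝ) →ₗ[ℝ] (Fin n → ℝ) := (LinearMap.id : (Fin n → ℝ) →ₗ[ℝ] (Fin n → ℝ)) - S.subtype ∘ₗ π with hρ
  have hρ0 : ∀ u ∈ S, ρL u = 0 := by
    intro u hu
    simp only [hρ, LinearMap.sub_apply, LinearMap.id_apply, LinearMap.comp_apply]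
    rw [hπ, Submodule.projectionOnto_apply_left hq ⟨u, hu⟩]
    simp
  have hρmem : ∀ u : Fin n → ℝ, ρL u = 0 → u ∈ S := by
    intro u hu
    have h2 : u - (S.subtype ∘ₗ π) u = 0 := by
      simpa [hρ, LinearMap.sub_apply] using hu
    rw [sub_eq_zero] at h2
    rw [h2]
    exact (π u).2
  set L := LinearMap.toContinuousLinearMap ρL with hLd
  have hLρ : ∀ u, L u = ρL u := fun u => rfl
  have hg : ∀ s ∈ Set.Ico 0 t, HasDerivWithinAt (fun s => L (f s)) 0 (Set.Ici s) s := by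
    intro s hs
    have hd := (L.hasFDerivAt.comp_hasDerivAt s (hf s hs.1))
    have h0 : L (G.stoich.mulVec (G.massAction κ (f s))) = 0 := by
      rw [hLρ]
      exact hρ0 _ ⟨G.massAction κ (f s), rfl⟩
    rw [h0] at hd
    exact hd.hasDerivWithinAt
  have hcont : ContinuousOn (fun s => L (f s)) (Set.Icc 0 t) := by
    intro s hs
    exact (L.continuous.continuousAt.comp (hf s hs.1).continuousAt).continuousWithinAt
  have := constant_of_has_deriv_right_zero hcont hg t (Set.mem_Icc.2 ⟨ht, le_refl t⟩)
  refine hρmem _ ?_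
  rw [← hLρ, map_sub, this, sub_self]

end RG14
namespace RG14
open ReactionGraph

variable {n p : ℕ}

lemma ball_pos {xs : Fin n → ℝ} {r : ℝ} (hrm : ∀ i, r < xs i)
    (x : Fin n → ℝ) (hx : dist x xs ≤ r) : Pos x := by
  intro i
  have h1 : dist (x i) (xs i) ≤ dist x xs := dist_le_pi_dist x xs i
  have h2 : |x i - xs i| ≤ r := by
    rw [← Real.dist_eq]; exact le_trans h1 hx
  have := (abs_le.1 h2).1
  linarith [hrm i]

lemma confine (G : ReactionGraph n p) (κ : Fin p → ℝ) (hκ : ∀ e, 0 < κ e)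
    (xs : Fin n → ℝ) (hxs : Pos xs) (hnb : G.inc.mulVec (G.massAction κ xs) = 0)
    (hn : 0 < n) (r : ℝ) (hr0 : 0 < r) (hrm : ∀ i, r < xs i) :
    ∃ δ : ℝ, 0 < δ ∧ δ ≤ r ∧ ∀ f : ℝ → Fin n → ℝ,
      (∀ t : ℝ, 0 ≤ t → HasDerivAt f (G.stoich.mulVec (G.massAction κ (f t))) t) →
      Pos (f 0) → dist (f 0) xs < δ → ∀ t : ℝ, 0 ≤ t → dist (f t) xs < r := by
  classical
  haveI : Nonempty (Fin n) := ⟨⟨0, hn⟩⟩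
  -- the sphere of radius r is nonempty and compact
  have hxw : (fun i : Fin n => xs i + r) ∈ Metric.sphere xs r := by
    have heq : (fun i : Fin n => xs i + r) - xs = fun _ : Fin n => r := by
      funext i; simp
    rw [Metric.mem_sphere, dist_eq_norm, heq, pi_norm_const, Real.norm_eq_abs, abs_of_pos hr0]
  obtain ⟨xm, hxm, hxmmin⟩ := (isCompact_sphere xs r).exists_isMinOn ⟨_, hxw⟩
    (phi_continuous xs).continuousOn
  set m := phi xs xm with hm
  have hxmr : dist xm xs = r := hxm
  have hxmne : xm ≠ xs := by
    intro h; rw [h, dist_self] at hxmr; exact hr0.ne hxmr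
  have hmpos : 0 < m :=
    phi_pos_of_ne hxs (fun i => (ball_pos hrm xm hxmr.le i).le) hxmne
  -- neighborhood where phi < m
  have hUopen : IsOpen {x : Fin n → ℝ | phi xs x < m} :=
    isOpen_lt (phi_continuous xs) continuous_const
  have hxsU : xs ∈ {x : Fin n → ℝ | phi xs x < m} := by
    simp only [Set.mem_setOf_eq, phi_self]; exact hmpos
  obtain ⟨δ1, hδ1pos, hδ1⟩ := Metric.isOpen_iff.1 hUopen xs hxsU
  refine ⟨min δ1 r, lt_min hδ1pos hr0, min_le_right _ _, ?_⟩
  intro f hf hfpos hfdist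
  by_contra hcon
  push_neg at hcon
  obtain ⟨t₀, ht₀0, ht₀⟩ := hcon
  set g : ℝ → ℝ := fun t => dist (f t) xs with hg
  have hfc : ∀ s : ℝ, 0 ≤ s → ContinuousAt f s := fun s hs => (hf s hs).continuousAt
  have hgc : ContinuousOn g (Set.Ici 0) := by
    intro s hs
    have h1 : ContinuousAt (fun t => dist (f t) xs) s := (hfc s hs).dist continuousAt_const
    exact h1.continuousWithinAt
  set E := {t : ℝ | 0 ≤ t ∧ r ≤ g t} with hE
  have hEne : E.Nonempty := ⟨t₀, ht₀0, ht₀⟩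
  have hEbd : BddBelow E := ⟨0, fun t ht => ht.1⟩
  have hEcl : IsClosed E := by
    have heq : E = Set.Ici 0 ∩ g ⁻¹' Set.Ici r := Set.ext fun t => Iff.rfl
    rw [heq]
    exact hgc.preimage_isClosed_of_isClosed isClosed_Ici isClosed_Ici
  set T := sInf E with hT
  have hTE : T ∈ E := hEcl.csInf_mem hEne hEbd
  have hT0 : 0 ≤ T := hTE.1
  have hlt : ∀ s, 0 ≤ s → s < T → g s < r := by
    intro s hs hsT
    by_contra hge
    push_neg at hge
    exact absurd (csInf_le hEbd ⟨hs, hge⟩) (not_le.2 hsT)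
  have hg0 : g 0 < r := lt_of_lt_of_le hfdist (min_le_right δ1 r)
  have hTpos : 0 < T := by
    rcases eq_or_lt_of_le hT0 with h | h
    · exfalso
      have h2 := hTE.2
      rw [← h] at h2
      exact absurd h2 (not_le.2 hg0)
    · exact h
  have hgTle : g T ≤ r := by
    have hcl : T ∈ closure (Set.Ico 0 T) := by
      rw [closure_Ico hTpos.ne]
      exact ⟨hT0, le_refl T⟩
    have hnebot := mem_closure_iff_nhdsWithin_neBot.1 hcl
    have hcw : Filter.Tendsto g (nhdsWithin T (Set.Ico 0 T)) (nhds (g T)) :=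
      (hgc T hT0).mono (Set.Ico_subset_Ici_self : Set.Ico (0:ℝ) T ⊆ Set.Ici 0)
    refine le_of_tendsto hcw ?_
    refine eventually_nhdsWithin_of_forall ?_
    exact fun s hs => (hlt s hs.1 hs.2).le
  have hgTr : g T = r := le_antisymm hgTle hTE.2
  have hgler : ∀ s ∈ Set.Icc (0:ℝ) T, g s ≤ r := by
    intro s hs
    rcases lt_or_eq_of_le hs.2 with h | h
    · exact (hlt s hs.1 h).le
    · rw [h]; exact hgTle
  have hposf : ∀ s ∈ Set.Icc (0:ℝ) T, Pos (f s) := fun s hs =>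
    ball_pos hrm (f s) (hgler s hs)
  have hanti : AntitoneOn (fun t => phi xs (f t)) (Set.Icc 0 T) := by
    refine antitoneOn_of_deriv_nonpos (convex_Icc 0 T) ?_ ?_ ?_
    · exact (phi_continuous xs).comp_continuousOn
        (fun s hs => (hfc s hs.1).continuousWithinAt)
    · intro s hs
      rw [interior_Icc] at hs
      exact ((Vf_hasDerivAt G κ xs f s (hf s hs.1.le)
        (hposf s ⟨hs.1.le, hs.2.le⟩)).differentiableAt).differentiableWithinAt
    · intro s hs
      rw [interior_Icc] at hs
      rw [(Vf_hasDerivAt G κ xs f s (hf s hs.1.le) (hposf s ⟨hs.1.le, hs.2.le⟩)).deriv]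
      exact Wfun_nonpos G κ hκ (hposf s ⟨hs.1.le, hs.2.le⟩) hxs hnb
  have h1 : phi xs (f T) ≤ phi xs (f 0) :=
    hanti ⟨le_refl 0, hT0⟩ ⟨hT0, le_refl T⟩ hT0
  have h2 : phi xs (f 0) < m := by
    have : f 0 ∈ Metric.ball xs δ1 := by
      rw [Metric.mem_ball]
      exact lt_of_lt_of_le hfdist (min_le_left δ1 r)
    exact hδ1 this
  have h3 : m ≤ phi xs (f T) := hxmmin (by rw [Metric.mem_sphere]; exact hgTr)
  linarith

end RG14
namespace RG14
open ReactionGraph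

variable {n p : ℕ}

lemma attract (G : ReactionGraph n p) (κ : Fin p → ℝ) (hκ : ∀ e, 0 < κ e)
    (xs : Fin n → ℝ) (hxs : Pos xs) (hnb : G.inc.mulVec (G.massAction κ xs) = 0)
    (hn : 0 < n) :
    ∃ δ : ℝ, 0 < δ ∧ ∀ f : ℝ → Fin n → ℝ,
      (∀ t : ℝ, 0 ≤ t → HasDerivAt f (G.stoich.mulVec (G.massAction κ (f t))) t) →
      (f 0 - xs) ∈ LinearMap.range G.stoich.mulVecLin →
      Pos (f 0) → dist (f 0) xs < δ →
      Filter.Tendsto f Filter.atTop (nhds xs) := by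
  classical
  haveI : Nonempty (Fin n) := ⟨⟨0, hn⟩⟩
  set S := LinearMap.range G.stoich.mulVecLin with hSdef
  have hScl : IsClosed (S : Set (Fin n → ℝ)) := Submodule.closed_of_finiteDimensional S
  -- choose radius below all coordinates of xs
  obtain ⟨i₀, hi₀⟩ := Finset.exists_mem_eq_inf' (Finset.univ_nonempty) xs
  set r := Finset.univ.inf' Finset.univ_nonempty xs / 2 with hrdef
  have hr0 : 0 < r := by
    rw [hrdef, hi₀.2]
    linarith [hxs i₀]
  have hrm : ∀ i, r < xs i := by
    intro i
    have h1 : Finset.univ.inf' Finset.univ_nonempty xs ≤ xs i :=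
      Finset.inf'_le _ (Finset.mem_univ i)
    rw [hrdef]
    have := hxs i₀
    rw [hi₀.2] at h1 ⊢
    linarith
  obtain ⟨δ, hδ0, hδr, hδ⟩ := confine G κ hκ xs hxs hnb hn r hr0 hrm
  refine ⟨δ, hδ0, ?_⟩
  intro f hf hcls hfpos hfdist
  have hballt : ∀ t : ℝ, 0 ≤ t → dist (f t) xs < r := hδ f hf hfpos hfdist
  have hpost : ∀ t : ℝ, 0 ≤ t → Pos (f t) := fun t ht =>
    ball_pos hrm (f t) (hballt t ht).le
  have hclst : ∀ t : ℝ, 0 ≤ t → f t - xs ∈ S := by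
    intro t ht
    have h1 := class_inv G κ f hf t ht
    have h2 : f t - xs = (f t - f 0) + (f 0 - xs) := by abel
    rw [h2]
    exact Submodule.add_mem S h1 hcls
  have hfc : ∀ s : ℝ, 0 ≤ s → ContinuousAt f s := fun s hs => (hf s hs).continuousAt
  have hanti : AntitoneOn (fun t => phi xs (f t)) (Set.Ici 0) := by
    refine antitoneOn_of_deriv_nonpos (convex_Ici 0) ?_ ?_ ?_
    · exact (phi_continuous xs).comp_continuousOn
        (fun s hs => (hfc s hs).continuousWithinAt)
    · intro s hs
      rw [interior_Ici] at hs
      exact ((Vf_hasDerivAt G κ xs f s (hf s hs.le) (hpost s hs.le)).differentiableAt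
        ).differentiableWithinAt
    · intro s hs
      rw [interior_Ici] at hs
      rw [(Vf_hasDerivAt G κ xs f s (hf s hs.le) (hpost s hs.le)).deriv]
      exact Wfun_nonpos G κ hκ (hpost s hs.le) hxs hnb
  rw [Metric.tendsto_atTop]
  intro ε hε
  set ε' := min (ε/2) (r/2) with hε'def
  have hε'0 : 0 < ε' := lt_min (by linarith) (by linarith)
  have hε'r : ε' < r := lt_of_le_of_lt (min_le_right _ _) (by linarith)
  have hε'ε : ε' < ε := lt_of_le_of_lt (min_le_left _ _) (by linarith)
  -- the annulus and its minimum
  set Ann : Set (Fin n → ℝ) := {x | ε' ≤ dist x xs ∧ dist x xs ≤ r} with hAnn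
  have hAnncl : IsClosed Ann := by
    have h1 : Continuous (fun x : Fin n → ℝ => dist x xs) :=
      continuous_id.dist continuous_const
    exact (isClosed_le continuous_const h1).inter (isClosed_le h1 continuous_const)
  have hAnncomp : IsCompact Ann :=
    IsCompact.of_isClosed_subset (isCompact_closedBall xs r) hAnncl
      (fun x hx => Metric.mem_closedBall.2 hx.2)
  have hAnnne : Ann.Nonempty := by
    have hdist : dist (fun i : Fin n => xs i + ε') xs = ε' := by
      have heq : (fun i : Fin n => xs i + ε') - xs = fun _ : Fin n => ε' := by
        funext i; simp
      rw [dist_eq_norm, heq, pi_norm_const, Real.norm_eq_abs, abs_of_pos hε'0]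
    refine ⟨fun i => xs i + ε', ?_, ?_⟩
    · rw [hdist]
    · rw [hdist]; exact hε'r.le
  obtain ⟨x1, hx1, hx1min⟩ := hAnncomp.exists_isMinOn hAnnne (phi_continuous xs).continuousOn
  set m1 := phi xs x1 with hm1
  have hx1pos : Pos x1 := ball_pos hrm x1 hx1.2
  have hx1ne : x1 ≠ xs := by
    intro h
    have := hx1.1
    rw [h, dist_self] at this
    linarith
  have hm1pos : 0 < m1 := phi_pos_of_ne hxs (fun i => (hx1pos i).le) hx1ne
  -- Claim: eventually the Lyapunov function dips below m1
  have hB : ∃ t₀ : ℝ, 0 ≤ t₀ ∧ phi xs (f t₀) < m1 := by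
    by_contra hc
    push_neg at hc
    obtain ⟨ρ, hρpos, hρ⟩ := Metric.isOpen_iff.1
      (isOpen_lt (phi_continuous xs) continuous_const : IsOpen {x | phi xs x < m1}) xs
      (by simp only [Set.mem_setOf_eq, phi_self]; exact hm1pos)
    have hρlb : ∀ t : ℝ, 0 ≤ t → ρ ≤ dist (f t) xs := by
      intro t ht
      by_contra hlt
      push_neg at hlt
      have := hρ (Metric.mem_ball.2 hlt)
      exact absurd this (not_lt.2 (hc t ht))
    set ρ2 := min ρ r with hρ2
    have hρ20 : 0 < ρ2 := lt_min hρpos hr0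
    set D : Set (Fin n → ℝ) := {x | ρ2 ≤ dist x xs ∧ dist x xs ≤ r ∧ x - xs ∈ S} with hD
    have hDcl : IsClosed D := by
      have h1 : Continuous (fun x : Fin n → ℝ => dist x xs) :=
        continuous_id.dist continuous_const
      have h2 : IsClosed {x : Fin n → ℝ | x - xs ∈ S} :=
        hScl.preimage (continuous_id.sub continuous_const)
      exact (isClosed_le continuous_const h1).inter
        ((isClosed_le h1 continuous_const).inter h2)
    have hDcomp : IsCompact D :=
      IsCompact.of_isClosed_subset (isCompact_closedBall xs r) hDcl
        (fun x hx => Metric.mem_closedBall.2 hx.2.1)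
    have hDne : D.Nonempty := by
      refine ⟨f 0, ?_, (hballt 0 (le_refl 0)).le, hcls⟩
      exact le_trans (min_le_left _ _) (hρlb 0 (le_refl 0))
    have hDpos : ∀ x ∈ D, Pos x := fun x hx => ball_pos hrm x hx.2.1
    have hWcont : ContinuousOn (Wfun G κ xs) D :=
      (Wfun_continuousOn G κ xs).mono (fun x hx => hDpos x hx)
    obtain ⟨xM, hxM, hxMmax⟩ := hDcomp.exists_isMaxOn hDne hWcont
    set cM := Wfun G κ xs xM with hcM
    have hcMneg : cM < 0 := by
      refine Wfun_neg G κ hκ (hDpos xM hxM) hxs hnb ?_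
      intro hxMnb
      have heq := uniq G κ hκ xs hxs hnb xM xs (hDpos xM hxM) hxs hxMnb hnb hxM.2.2
      have := hxM.1
      rw [heq, dist_self] at this
      linarith
    -- linear decay of the Lyapunov function
    have hdecay : ∀ t : ℝ, 0 ≤ t → phi xs (f t) ≤ phi xs (f 0) + t * cM := by
      intro t ht
      have hu : AntitoneOn (fun s => phi xs (f s) - s * cM) (Set.Ici 0) := by
        refine antitoneOn_of_deriv_nonpos (convex_Ici 0) ?_ ?_ ?_
        · refine ContinuousOn.sub ?_ (continuousOn_id.mul continuousOn_const)
          exact (phi_continuous xs).comp_continuousOn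
            (fun s hs => (hfc s hs).continuousWithinAt)
        · intro s hs
          rw [interior_Ici] at hs
          exact (((Vf_hasDerivAt G κ xs f s (hf s hs.le) (hpost s hs.le)).sub
            (hasDerivAt_mul_const cM)).differentiableAt).differentiableWithinAt
        · intro s hs
          rw [interior_Ici] at hs
          rw [((Vf_hasDerivAt G κ xs f s (hf s hs.le) (hpost s hs.le)).fun_sub
            (hasDerivAt_mul_const cM)).deriv]
          have hfD : f s ∈ D := by
            refine ⟨le_trans (min_le_left _ _) (hρlb s hs.le), (hballt s hs.le).le,
              hclst s hs.le⟩
          have := hxMmax hfD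
          simp only [Set.mem_setOf_eq] at this
          linarith [this]
      have := hu (Set.mem_Ici.2 (le_refl 0)) (Set.mem_Ici.2 ht) ht
      simp only [zero_mul, sub_zero] at this
      linarith
    -- contradiction with nonnegativity of the Lyapunov function
    set t₁ := max 0 ((phi xs (f 0) + 1) / (-cM)) with ht₁
    have ht₁0 : 0 ≤ t₁ := le_max_left _ _
    have h1 := hdecay t₁ ht₁0
    have h2 : 0 ≤ phi xs (f t₁) := phi_nonneg hxs (fun i => (hpost t₁ ht₁0 i).le)
    have h3 : (phi xs (f 0) + 1) / (-cM) ≤ t₁ := le_max_right _ _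
    have h4 : phi xs (f 0) + 1 ≤ t₁ * (-cM) := by
      rw [div_le_iff₀ (by linarith : (0:ℝ) < -cM)] at h3
      linarith
    linarith
  obtain ⟨t₀, ht₀0, hVt₀⟩ := hB
  refine ⟨t₀, fun t ht' => ?_⟩
  have ht0 : 0 ≤ t := le_trans ht₀0 ht'
  have h1 : phi xs (f t) ≤ phi xs (f t₀) :=
    hanti (Set.mem_Ici.2 ht₀0) (Set.mem_Ici.2 ht0) ht'
  by_contra hge
  push_neg at hge
  have hfAnn : f t ∈ Ann := by
    refine ⟨?_, (hballt t ht0).le⟩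
    exact le_trans (le_trans (min_le_left _ _) (by linarith : ε/2 ≤ ε)) hge
  have := hx1min hfAnn
  simp only [Set.mem_setOf_eq] at this
  linarith
end RG14

open ReactionGraph in
/-- uniqueness and asymptotic stability: if a mass-action system admits one
positive node balanced steady state w.r.t. a weakly reversible reaction graph `G`, then
(a) every positive steady state is node balanced w.r.t. `G`; (b) each stoichiometric
compatibility class (of a positive point) contains exactly one positive node balanced
steady state; and (c) every positive node balanced steady state is locally asymptotically
stable relative to its stoichiometric compatibility class. -/
theorem node_balanced_unique_stable {n p : ℕ} (G : ReactionGraph n p)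
    (hwr : G.WeaklyReversible) (κ : Fin p → ℝ) (hκ : ∀ e, 0 < κ e)
    (hex : ∃ x : Fin n → ℝ, Pos x ∧ G.inc.mulVec (G.massAction κ x) = 0) :
    -- (a) every positive steady state is node balanced
    (∀ x : Fin n → ℝ, Pos x → G.stoich.mulVec (G.massAction κ x) = 0 →
      G.inc.mulVec (G.massAction κ x) = 0) ∧
    -- (b) exactly one positive (node balanced) steady state in each compatibility class
    (∀ x₀ : Fin n → ℝ, Pos x₀ →
      ∃! x : Fin n → ℝ, Pos x ∧ (x - x₀) ∈ LinearMap.range G.stoich.mulVecLin ∧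
        G.inc.mulVec (G.massAction κ x) = 0) ∧
    -- (c) local asymptotic stability relative to the class
    (∀ xs : Fin n → ℝ, Pos xs → G.inc.mulVec (G.massAction κ xs) = 0 →
      -- Lyapunov stability
      ((∀ ε : ℝ, 0 < ε → ∃ δ : ℝ, 0 < δ ∧
        ∀ f : ℝ → (Fin n → ℝ),
          (∀ t : ℝ, 0 ≤ t → HasDerivAt f (G.stoich.mulVec (G.massAction κ (f t))) t) →
          (f 0 - xs) ∈ LinearMap.range G.stoich.mulVecLin →
          Pos (f 0) → dist (f 0) xs < δ →
          ∀ t : ℝ, 0 ≤ t → dist (f t) xs < ε) ∧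
      -- local attractivity within the class
      (∃ δ : ℝ, 0 < δ ∧
        ∀ f : ℝ → (Fin n → ℝ),
          (∀ t : ℝ, 0 ≤ t → HasDerivAt f (G.stoich.mulVec (G.massAction κ (f t))) t) →
          (f 0 - xs) ∈ LinearMap.range G.stoich.mulVecLin →
          Pos (f 0) → dist (f 0) xs < δ →
          Filter.Tendsto f Filter.atTop (nhds xs)))) := by
  obtain ⟨xs0, hxs0, hnb0⟩ := hex
  refine ⟨?_, ?_, ?_⟩
  · -- (a)
    intro x hx hsteady
    exact RG14.parta G κ x xs0 hκ hx hxs0 hnb0 hsteady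
  · -- (b)
    intro x₀ hx₀
    obtain ⟨z, hzpos, hzcl, hznb⟩ := RG14.exists_nb G κ hκ xs0 hxs0 hnb0 x₀ hx₀
    refine ⟨z, ⟨hzpos, hzcl, hznb⟩, ?_⟩
    rintro y ⟨hypos, hycl, hynb⟩
    refine RG14.uniq G κ hκ xs0 hxs0 hnb0 y z hypos hzpos hynb hznb ?_
    have h2 : y - z = (y - x₀) - (z - x₀) := by abel
    rw [h2]
    exact Submodule.sub_mem _ hycl hzcl
  · -- (c)
    intro xs hxs hnbxs
    rcases Nat.eq_zero_or_pos n with hn0 | hn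
    · subst hn0
      haveI : Subsingleton (Fin 0 → ℝ) := ⟨fun a b => funext fun i => i.elim0⟩
      constructor
      · intro ε hε
        refine ⟨1, one_pos, fun f _ _ _ _ t _ => ?_⟩
        rw [Subsingleton.elim (f t) xs, dist_self]
        exact hε
      · refine ⟨1, one_pos, fun f _ _ _ _ => ?_⟩
        have hfc : f = fun _ => xs := funext fun t => Subsingleton.elim _ _
        rw [hfc]
        exact tendsto_const_nhds
    · haveI : Nonempty (Fin n) := ⟨⟨0, hn⟩⟩
      constructor
      · intro ε hε
        obtain ⟨i₀, hi₀⟩ := Finset.exists_mem_eq_inf' (Finset.univ_nonempty) xs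
        set r := min (ε/2) (Finset.univ.inf' Finset.univ_nonempty xs / 2) with hrdef
        have hinfpos : 0 < Finset.univ.inf' Finset.univ_nonempty xs := by
          rw [hi₀.2]; exact hxs i₀
        have hr0 : 0 < r := lt_min (by linarith) (by linarith)
        have hrε : r < ε := lt_of_le_of_lt (min_le_left _ _) (by linarith)
        have hrm : ∀ i, r < xs i := by
          intro i
          have h1 : Finset.univ.inf' Finset.univ_nonempty xs ≤ xs i :=
            Finset.inf'_le _ (Finset.mem_univ i)
          have h2 : r ≤ Finset.univ.inf' Finset.univ_nonempty xs / 2 := min_le_right _ _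
          linarith
        obtain ⟨δ, hδ0, _, hδ⟩ := RG14.confine G κ hκ xs hxs hnbxs hn r hr0 hrm
        exact ⟨δ, hδ0, fun f hf _ hfpos hfd t ht =>
          lt_trans (hδ f hf hfpos hfd t ht) hrε⟩
      · obtain ⟨δ, hδ0, h⟩ := RG14.attract G κ hκ xs hxs hnbxs hn
        exact ⟨δ, hδ0, fun f hf hcl hfpos hfd => h f hf hcl hfpos hfd⟩
end

section
/- In the auxiliary network construction, ker π = span{e_{i,1→j} : i ∈ [n], j ∈ [m_G]} and has dimension n(m_G−1), the stoichiometric subspace S' of the auxiliary network N' satisfies π(S') = S, dim S' = s + n(m_G − 1), and the deficiency of N' equals δ_G. -/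
open scoped Classical

namespace AuxNetwork

open ReactionGraph

variable {n p : ℕ}

/-- The projection `π : ℝ^{n×m_G} → ℝ^n`, `π(x)_i = Σ_j x_{ij}`. -/
noncomputable def piMat (n m : ℕ) : Matrix (Fin n) (Fin n × Fin m) ℝ :=
  fun i q => if q.1 = i then 1 else 0

/-- The vector `e_{i,j→j'}` with `-1` in entry `(i,j)` and `+1` in entry `(i,j')`. -/
noncomputable def evec {n m : ℕ} (i : Fin n) (j j' : Fin m) : Fin n × Fin m → ℝ :=
  fun q => (if q = (i, j') then (1 : ℝ) else 0) - (if q = (i, j) then (1 : ℝ) else 0)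

/-- The complex `y^j = Σ_i (Y_j)_i (X_i, j)` of the auxiliary network, as a vector. -/
noncomputable def yvec (G : ReactionGraph n p) (j : Fin G.m) : Fin n × Fin G.m → ℝ :=
  fun q => if q.2 = j then (G.Y j q.1 : ℝ) else 0

/-- Stoichiometric subspace `S'` of the auxiliary network `N'`: spanned by the reaction
vectors `y^{tgt e} - y^{src e}` and the vectors of the reactions
`ε(X_i,j) → ε(X_i,j')` (which span the same space as the `e_{i,j→j'}`). -/
noncomputable def S' (G : ReactionGraph n p) : Submodule ℝ (Fin n × Fin G.m → ℝ) :=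
  Submodule.span ℝ
    ({v | ∃ e : Fin p, v = yvec G (G.tgt e) - yvec G (G.src e)} ∪
      {v | ∃ (i : Fin n) (j j' : Fin G.m), j ≠ j' ∧ v = evec i j j'})

end AuxNetwork

namespace AuxNetwork

open ReactionGraph

variable {n p : ℕ}

lemma piMat_mulVec {n m : ℕ} (v : Fin n × Fin m → ℝ) (i : Fin n) :
    (piMat n m).mulVec v i = ∑ j, v (i, j) := by
  simp only [piMat, Matrix.mulVec, dotProduct, Fintype.sum_prod_type, ite_mul, one_mul,
    zero_mul]
  rw [Finset.sum_eq_single i]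
  · simp
  · intro b _ hb; simp [hb]
  · simp

lemma pi_evec {n m : ℕ} (i : Fin n) (j j' : Fin m) :
    (piMat n m).mulVec (evec i j j') = 0 := by
  funext i'
  rw [piMat_mulVec]
  simp [evec, Finset.sum_sub_distrib, Prod.ext_iff, ite_and]

lemma pi_yvec (G : ReactionGraph n p) (j : Fin G.m) :
    (piMat n G.m).mulVec (yvec G j) = fun i => (G.Y j i : ℝ) := by
  funext i
  rw [piMat_mulVec]
  simp [yvec]

lemma pi_reaction (G : ReactionGraph n p) (e : Fin p) :
    (piMat n G.m).mulVecLin (yvec G (G.tgt e) - yvec G (G.src e)) = G.stoich.transpose e := by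
  rw [map_sub]
  funext i
  simp [Matrix.mulVecLin_apply, pi_yvec, stoich, Matrix.transpose_apply]

lemma ker_pi {n m : ℕ} (hm : 0 < m) :
    LinearMap.ker (piMat n m).mulVecLin =
      Submodule.span ℝ {v | ∃ (i : Fin n) (j : Fin m), v = evec i (⟨0, hm⟩ : Fin m) j} := by
  apply le_antisymm
  · intro x hx
    have hx' : ∀ i : Fin n, ∑ j, x (i, j) = 0 := by
      intro i
      have h0 := congrFun (LinearMap.mem_ker.mp hx) i
      rwa [Matrix.mulVecLin_apply, piMat_mulVec] at h0
    have hxe : x = ∑ q : Fin n × Fin m, x q • evec q.1 (⟨0, hm⟩ : Fin m) q.2 := by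
      funext q'
      simp only [Finset.sum_apply, Pi.smul_apply, smul_eq_mul, evec, mul_sub]
      rw [Finset.sum_sub_distrib]
      have h1 : ∑ q : Fin n × Fin m, x q * (if q' = (q.1, q.2) then (1 : ℝ) else 0) = x q' := by
        simp [mul_ite, Finset.sum_ite_eq]
      have h2 : ∑ q : Fin n × Fin m,
          x q * (if q' = (q.1, (⟨0, hm⟩ : Fin m)) then (1 : ℝ) else 0) = 0 := by
        simp only [Fintype.sum_prod_type, mul_ite, mul_one, mul_zero]
        rw [Finset.sum_comm]
        simp [← Finset.sum_ite_eq Finset.univ q'.1, Prod.ext_iff, ite_and, hx']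
      rw [h1, h2, sub_zero]
    rw [hxe]
    exact Submodule.sum_mem _ fun q _ =>
      Submodule.smul_mem _ _ (Submodule.subset_span ⟨q.1, q.2, rfl⟩)
  · rw [Submodule.span_le]
    rintro v ⟨i, j, rfl⟩
    exact LinearMap.mem_ker.mpr (by rw [Matrix.mulVecLin_apply, pi_evec])

lemma pi_surj {n m : ℕ} (hm : 0 < m) :
    LinearMap.range (piMat n m).mulVecLin = ⊤ := by
  rw [LinearMap.range_eq_top]
  intro x
  refine ⟨fun q => if q.2 = (⟨0, hm⟩ : Fin m) then x q.1 else 0, ?_⟩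
  funext i
  rw [Matrix.mulVecLin_apply, piMat_mulVec]
  simp

lemma finrank_ker_pi {n m : ℕ} (hm : 0 < m) :
    Module.finrank ℝ (LinearMap.ker (piMat n m).mulVecLin) = n * (m - 1) := by
  have h := LinearMap.finrank_range_add_finrank_ker (piMat n m).mulVecLin
  rw [pi_surj hm, finrank_top, Module.finrank_fintype_fun_eq_card,
    Module.finrank_fintype_fun_eq_card, Fintype.card_prod, Fintype.card_fin,
    Fintype.card_fin] at h
  have hmul : n * (m - 1) = n * m - n := by
    cases m with
    | zero => simp
    | succ k => simp [Nat.mul_succ]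
  omega

end AuxNetwork

set_option maxHeartbeats 1000000
set_option synthInstance.maxHeartbeats 1000000

open ReactionGraph AuxNetwork in
/-- for the auxiliary network `N'`:
`ker π = span{e_{i,1→j}}` of dimension `n(m_G - 1)`; `π(S') = S`;
`dim S' = s + n(m_G - 1)`; and the deficiency of `N'`
(`m_G(n+1)` complexes, `ℓ_G + n` linkage classes) equals `δ_G`. -/
theorem aux_network_deficiency {n p : ℕ} (G : ReactionGraph n p) (hm : 0 < G.m) :
    LinearMap.ker (piMat n G.m).mulVecLin =
        Submodule.span ℝ {v | ∃ (i : Fin n) (j : Fin G.m), v = evec i (⟨0, hm⟩ : Fin G.m) j} ∧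
      Module.finrank ℝ (LinearMap.ker (piMat n G.m).mulVecLin) = n * (G.m - 1) ∧
      Submodule.map (piMat n G.m).mulVecLin (S' G) = LinearMap.range G.stoich.mulVecLin ∧
      Module.finrank ℝ (S' G) =
        Module.finrank ℝ (LinearMap.range G.stoich.mulVecLin) + n * (G.m - 1) ∧
      ((G.m * (n + 1) : ℤ) - (G.numComponents + n) - Module.finrank ℝ (S' G)) =
        G.deficiency := by
  classical
  set Pm := (piMat n G.m).mulVecLin with hPm
  have hker : LinearMap.ker Pm =
      Submodule.span ℝ {v | ∃ (i : Fin n) (j : Fin G.m), v = evec i (⟨0, hm⟩ : Fin G.m) j} :=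
    ker_pi hm
  have hkd : Module.finrank ℝ (LinearMap.ker Pm) = n * (G.m - 1) := finrank_ker_pi hm
  have hmap : Submodule.map Pm (S' G) = LinearMap.range G.stoich.mulVecLin := by
    rw [S', Submodule.map_span, Matrix.range_mulVecLin]
    apply le_antisymm
    · rw [Submodule.span_le]
      rintro v ⟨w, hw, rfl⟩
      rcases hw with ⟨e, rfl⟩ | ⟨i, j, j', _, rfl⟩
      · exact Submodule.subset_span ⟨e, (pi_reaction G e).symm⟩
      · have : Pm (evec i j j') = 0 := by rw [hPm, Matrix.mulVecLin_apply, pi_evec]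
        rw [this]
        exact Submodule.zero_mem _
    · rw [Submodule.span_le]
      rintro v ⟨e, rfl⟩
      exact Submodule.subset_span
        ⟨yvec G (G.tgt e) - yvec G (G.src e), Or.inl ⟨e, rfl⟩, pi_reaction G e⟩
  have hle : LinearMap.ker Pm ≤ S' G := by
    rw [hker, Submodule.span_le]
    rintro v ⟨i, j, rfl⟩
    by_cases hj : (⟨0, hm⟩ : Fin G.m) = j
    · have h0 : evec i (⟨0, hm⟩ : Fin G.m) j = 0 := by
        funext q; simp [evec, hj]
      rw [h0]
      exact Submodule.zero_mem _
    · exact Submodule.subset_span (Or.inr ⟨i, ⟨0, hm⟩, j, hj, rfl⟩)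
  have hfs : Module.finrank ℝ (S' G) =
      Module.finrank ℝ (LinearMap.range G.stoich.mulVecLin) + n * (G.m - 1) := by
    have hrn := LinearMap.finrank_range_add_finrank_ker (Pm.comp (S' G).subtype)
    rw [LinearMap.range_comp, Submodule.range_subtype, LinearMap.ker_comp] at hrn
    have hk2 : Module.finrank ℝ
        (Submodule.comap (S' G).subtype (LinearMap.ker Pm)) =
        Module.finrank ℝ (LinearMap.ker Pm) :=
      (Submodule.comapSubtypeEquivOfLe hle).finrank_eq
    rw [hmap, hk2, hkd] at hrn
    exact hrn.symm
  refine ⟨hker, hkd, hmap, hfs, ?_⟩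
  rw [hfs, ReactionGraph.deficiency]
  have hrank : G.stoich.rank = Module.finrank ℝ (LinearMap.range G.stoich.mulVecLin) := rfl
  rw [hrank]
  have hc : ((G.m - 1 : ℕ) : ℤ) = (G.m : ℤ) - 1 := by omega
  push_cast [hc]
  ring
end

section
/- Decomposition of node balancing into subnetworks: Let N be a reaction network with disjoint reaction subsets R_1,…,R_ℓ, complementary subset R_{ℓ+1}, inducing subnetworks N_1,…,N_{ℓ+1}; let G be a reaction graph of N, G_{N_i} the induced reaction graphs of the N_i, and G' the induced disjoint-union reaction graph. Then for x* ∈ ℝ^n_{≥0} the following are equivalent: (i) x* is node balanced for N w.r.t. G and its projections are node balanced for N_i w.r.t. G_{N_i} for i = 1,…,ℓ; (ii) x* is node balanced for N w.r.t. G'; (iii) the projections of x* are node balanced for N_i w.r.t. G_{N_i} for all i = 1,…,ℓ+1. -/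
open scoped Classical

open ReactionGraph in
/-- decomposition into subnetworks: let `part : Fin p → Fin (ℓ+1)` split the
reactions into the disjoint subsets `R_1, …, R_ℓ` and the complementary subset `R_{ℓ+1}`
(the last index).  Let `G` be a reaction graph of `N` and `G'` the induced disjoint-union
reaction graph: `G ⪯ G'` via `φ`, which maps the endpoints of each edge of `G'` to the
corresponding endpoints in `G`, identifies no two nodes met by edges of the same block,
and nodes met by edges of different blocks are distinct in `G'`.  Under mass-action
kinetics, for a nonnegative state `x*` the following are equivalent:
(i) `x*` is node balanced w.r.t. `G` and each subnetwork `N_i`, `i ≤ ℓ`, is balanced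
(block-wise balance at every node, which is node balancing of the projection of `x*`
w.r.t. `G_{N_i}`);
(ii) `x*` is node balanced w.r.t. `G'`;
(iii) every subnetwork `N_i`, `i = 1, …, ℓ+1`, is balanced. -/
theorem decomposition_node_balanced {n p ℓ : ℕ} (G G' : ReactionGraph n p)
    (part : Fin p → Fin (ℓ + 1))
    (φ : Fin G'.m → Fin G.m)
    (hs : ∀ e, φ (G'.src e) = G.src e) (ht : ∀ e, φ (G'.tgt e) = G.tgt e)
    (hlab : ∀ k, G.Y (φ k) = G'.Y k)
    (hblock : ∀ e e', part e = part e' →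
      (G.src e = G.src e' → G'.src e = G'.src e') ∧
      (G.src e = G.tgt e' → G'.src e = G'.tgt e') ∧
      (G.tgt e = G.src e' → G'.tgt e = G'.src e') ∧
      (G.tgt e = G.tgt e' → G'.tgt e = G'.tgt e'))
    (hsep : ∀ e e', part e ≠ part e' →
      G'.src e ≠ G'.src e' ∧ G'.src e ≠ G'.tgt e' ∧
      G'.tgt e ≠ G'.src e' ∧ G'.tgt e ≠ G'.tgt e')
    (κ : Fin p → ℝ) (hκ : ∀ e, 0 < κ e)
    (x : Fin n → ℝ) (hx : ∀ i, 0 ≤ x i) :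
    -- (i) ↔ (ii) and (ii) ↔ (iii)
    (((∀ k : Fin G.m,
          ∑ e ∈ Finset.univ.filter (fun e => G.tgt e = k), G.massAction κ x e =
            ∑ e ∈ Finset.univ.filter (fun e => G.src e = k), G.massAction κ x e) ∧
        (∀ i : Fin (ℓ + 1), i ≠ Fin.last ℓ → ∀ k : Fin G.m,
          ∑ e ∈ Finset.univ.filter (fun e => part e = i ∧ G.tgt e = k),
              G.massAction κ x e =
            ∑ e ∈ Finset.univ.filter (fun e => part e = i ∧ G.src e = k),
              G.massAction κ x e)) ↔
      (∀ k : Fin G'.m,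
          ∑ e ∈ Finset.univ.filter (fun e => G'.tgt e = k), G.massAction κ x e =
            ∑ e ∈ Finset.univ.filter (fun e => G'.src e = k), G.massAction κ x e)) ∧
    ((∀ k : Fin G'.m,
          ∑ e ∈ Finset.univ.filter (fun e => G'.tgt e = k), G.massAction κ x e =
            ∑ e ∈ Finset.univ.filter (fun e => G'.src e = k), G.massAction κ x e) ↔
      (∀ i : Fin (ℓ + 1), ∀ k : Fin G.m,
          ∑ e ∈ Finset.univ.filter (fun e => part e = i ∧ G.tgt e = k),
              G.massAction κ x e =
            ∑ e ∈ Finset.univ.filter (fun e => part e = i ∧ G.src e = k),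
              G.massAction κ x e)) := by
  
  classical
  set f := G.massAction κ x with hf
  -- filter equality at nodes of G'
  have key : ∀ (k' : Fin G'.m) (e₀ : Fin p), (G'.src e₀ = k' ∨ G'.tgt e₀ = k') →
      (Finset.univ.filter (fun e => G'.tgt e = k')
        = Finset.univ.filter (fun e => part e = part e₀ ∧ G.tgt e = φ k')) ∧
      (Finset.univ.filter (fun e => G'.src e = k')
        = Finset.univ.filter (fun e => part e = part e₀ ∧ G.src e = φ k')) := by
    intro k' e₀ h₀
    constructor <;> (ext e; simp only [Finset.mem_filter, Finset.mem_univ, true_and])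
    · constructor
      · intro h
        have hp : part e = part e₀ := by
          by_contra hne
          obtain ⟨h1, h2, h3, h4⟩ := hsep e e₀ hne
          rcases h₀ with h₀ | h₀
          · exact h3 (h.trans h₀.symm)
          · exact h4 (h.trans h₀.symm)
        exact ⟨hp, by rw [← ht, h]⟩
      · rintro ⟨hp, hk⟩
        obtain ⟨hb1, hb2, hb3, hb4⟩ := hblock e e₀ hp
        rcases h₀ with h₀ | h₀
        · have : G.tgt e = G.src e₀ := by rw [hk, ← h₀, hs]
          rw [hb3 this, h₀]
        · have : G.tgt e = G.tgt e₀ := by rw [hk, ← h₀, ht]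
          rw [hb4 this, h₀]
    · constructor
      · intro h
        have hp : part e = part e₀ := by
          by_contra hne
          obtain ⟨h1, h2, h3, h4⟩ := hsep e e₀ hne
          rcases h₀ with h₀ | h₀
          · exact h1 (h.trans h₀.symm)
          · exact h2 (h.trans h₀.symm)
        exact ⟨hp, by rw [← hs, h]⟩
      · rintro ⟨hp, hk⟩
        obtain ⟨hb1, hb2, hb3, hb4⟩ := hblock e e₀ hp
        rcases h₀ with h₀ | h₀
        · have : G.src e = G.src e₀ := by rw [hk, ← h₀, hs]
          rw [hb1 this, h₀]
        · have : G.src e = G.tgt e₀ := by rw [hk, ← h₀, ht]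
          rw [hb2 this, h₀]
  -- (iii) ↔ (ii)
  have hiff : (∀ i : Fin (ℓ + 1), ∀ k : Fin G.m,
      ∑ e ∈ Finset.univ.filter (fun e => part e = i ∧ G.tgt e = k), f e =
        ∑ e ∈ Finset.univ.filter (fun e => part e = i ∧ G.src e = k), f e) ↔
      (∀ k' : Fin G'.m,
      ∑ e ∈ Finset.univ.filter (fun e => G'.tgt e = k'), f e =
        ∑ e ∈ Finset.univ.filter (fun e => G'.src e = k'), f e) := by
    constructor
    · intro h k'
      obtain ⟨e₀, h₀⟩ := G'.noIsolated k'
      obtain ⟨ht', hs'⟩ := key k' e₀ h₀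
      rw [ht', hs']
      exact h (part e₀) (φ k')
    · intro h i k
      by_cases hex : ∃ e₀, part e₀ = i ∧ (G.src e₀ = k ∨ G.tgt e₀ = k)
      · obtain ⟨e₀, hpe, hke⟩ := hex
        rcases hke with hke | hke
        · obtain ⟨ht', hs'⟩ := key (G'.src e₀) e₀ (Or.inl rfl)
          rw [hs e₀, hpe, hke] at ht' hs'
          rw [← ht', ← hs']
          exact h _
        · obtain ⟨ht', hs'⟩ := key (G'.tgt e₀) e₀ (Or.inr rfl)
          rw [ht e₀, hpe, hke] at ht' hs'
          rw [← ht', ← hs']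
          exact h _
      · push_neg at hex
        have e1 : Finset.univ.filter (fun e => part e = i ∧ G.tgt e = k) = ∅ := by
          ext e
          simp only [Finset.mem_filter, Finset.mem_univ, true_and, Finset.notMem_empty,
            iff_false, not_and]
          intro hpe hke
          exact (hex e hpe).2 hke
        have e2 : Finset.univ.filter (fun e => part e = i ∧ G.src e = k) = ∅ := by
          ext e
          simp only [Finset.mem_filter, Finset.mem_univ, true_and, Finset.notMem_empty,
            iff_false, not_and]
          intro hpe hke
          exact (hex e hpe).1 hke
        rw [e1, e2]
  -- partition of sums
  have hpartt : ∀ k : Fin G.m,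
      ∑ e ∈ Finset.univ.filter (fun e => G.tgt e = k), f e =
        ∑ i : Fin (ℓ + 1), ∑ e ∈ Finset.univ.filter (fun e => part e = i ∧ G.tgt e = k), f e := by
    intro k
    rw [← Finset.sum_fiberwise (Finset.univ.filter (fun e => G.tgt e = k)) part f]
    apply Finset.sum_congr rfl
    intro i _
    congr 1
    ext e
    simp only [Finset.mem_filter, Finset.mem_univ, true_and]
    tauto
  have hparts : ∀ k : Fin G.m,
      ∑ e ∈ Finset.univ.filter (fun e => G.src e = k), f e =
        ∑ i : Fin (ℓ + 1), ∑ e ∈ Finset.univ.filter (fun e => part e = i ∧ G.src e = k), f e := by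
    intro k
    rw [← Finset.sum_fiberwise (Finset.univ.filter (fun e => G.src e = k)) part f]
    apply Finset.sum_congr rfl
    intro i _
    congr 1
    ext e
    simp only [Finset.mem_filter, Finset.mem_univ, true_and]
    tauto
  constructor
  · rw [← hiff]
    constructor
    · rintro ⟨htot, hblk⟩ i k
      by_cases hi : i = Fin.last ℓ
      · subst hi
        have h1 := htot k
        rw [hpartt k, hparts k, ← Finset.sum_erase_add _ _ (Finset.mem_univ (Fin.last ℓ)),
          ← Finset.sum_erase_add _ _ (Finset.mem_univ (Fin.last ℓ))] at h1
        have h2 : ∑ j ∈ Finset.univ.erase (Fin.last ℓ),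
            ∑ e ∈ Finset.univ.filter (fun e => part e = j ∧ G.tgt e = k), f e =
            ∑ j ∈ Finset.univ.erase (Fin.last ℓ),
            ∑ e ∈ Finset.univ.filter (fun e => part e = j ∧ G.src e = k), f e := by
          apply Finset.sum_congr rfl
          intro j hj
          exact hblk j (Finset.ne_of_mem_erase hj) k
        rw [h2] at h1
        exact add_left_cancel h1
      · exact hblk i hi k
    · intro h
      refine ⟨fun k => ?_, fun i _ k => h i k⟩
      rw [hpartt k, hparts k]
      exact Finset.sum_congr rfl fun i _ => h i k
  · exact hiff.symm
end
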